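/- Fix 1 ≤ p ≤ n−1 and set k' = k + w_p, where w_p = n∑_{i=1}^{p} v_i (v_i the standard basis of C^{n-1}). Then y^p e H_k e = e_p H_{k'} e_p y^p inside Q = C[∂, y^{±1}]*Γ, where e = e_0. -/

import Mathlib

open Finset

/-- ω = e^{2πi/n}, a primitive n-th root of unity. -/
noncomputable def omegaRoot (n : ℕ) : ℂ := Complex.exp (2 * Real.pi * Complex.I / n)

namespace St4

/-- Contextual data abstracting the crossed product relations. -/
structure Ctx (Q : Type*) [Ring Q] [Algebra ℂ Q] where
  n : ℕ
  hn2 : 2 ≤ n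
  y : Q
  yinv : Q
  d : Q
  γ : Q
  e : ℕ → Q
  hyy' : y * yinv = 1
  hy'y : yinv * y = 1
  hWeyl : d * y - y * d = 1
  horth : ∀ i j, e i * e j = if i % n = j % n then e j else 0
  hsum : ∑ i ∈ range n, e i = 1
  hper : ∀ i, e (i + n) = e i
  hye : ∀ i, y * e i = e (i + 1) * y
  hed : ∀ i, e i * d = d * e (i + 1)
  hγe : ∃ c : ℕ → ℂ, γ = ∑ i ∈ range n, c i • e i

namespace Ctx

variable {Q : Type*} [Ring Q] [Algebra ℂ Q] (C : Ctx Q)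

lemma npos : 0 < C.n := lt_of_lt_of_le two_pos C.hn2

lemma e_add_mul (r q : ℕ) : C.e (r + q * C.n) = C.e r := by
  induction q with
  | zero => simp
  | succ q ih => rw [Nat.succ_mul, ← Nat.add_assoc, C.hper, ih]

lemma e_mod (i : ℕ) : C.e i = C.e (i % C.n) := by
  conv_lhs => rw [← Nat.mod_add_div i C.n, Nat.mul_comm, e_add_mul]

lemma e_congr {i j : ℕ} (h : i % C.n = j % C.n) : C.e i = C.e j := by
  rw [C.e_mod i, C.e_mod j, h]

lemma orth' {i j : ℕ} (h : i % C.n = j % C.n) : C.e i * C.e j = C.e j := by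
  rw [C.horth, if_pos h]

lemma orth0 {i j : ℕ} (h : ¬ i % C.n = j % C.n) : C.e i * C.e j = 0 := by
  rw [C.horth, if_neg h]

lemma idem (i : ℕ) : C.e i * C.e i = C.e i := C.orth' rfl

/-- test on idempotents -/
lemma eq_of_mul_e {x z : Q} (h : ∀ l, l < C.n → x * C.e l = z * C.e l) : x = z := by
  have hx : x = ∑ l ∈ range C.n, x * C.e l := by
    rw [← Finset.mul_sum, C.hsum, mul_one]
  have hz : z = ∑ l ∈ range C.n, z * C.e l := by
    rw [← Finset.mul_sum, C.hsum, mul_one]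
  rw [hx, hz]
  exact Finset.sum_congr rfl fun l hl => h l (Finset.mem_range.mp hl)

lemma e_y (i : ℕ) : C.e i * C.y = C.y * C.e (i + (C.n - 1)) := by
  have h1 : C.y * C.e (i + (C.n - 1)) = C.e (i + (C.n - 1) + 1) * C.y := C.hye _
  have h2 : i + (C.n - 1) + 1 = i + C.n := by have := C.hn2; omega
  rw [h1, h2, C.hper]

lemma yinv_e (i : ℕ) : C.yinv * C.e i = C.e (i + (C.n - 1)) * C.yinv := by
  have h := C.e_y i
  calc C.yinv * C.e i = C.yinv * (C.e i * (C.y * C.yinv)) := by rw [C.hyy', mul_one]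
    _ = C.yinv * C.y * (C.e (i + (C.n - 1)) * C.yinv) := by
        rw [← mul_assoc (C.e i), h]; noncomm_ring
    _ = C.e (i + (C.n - 1)) * C.yinv := by rw [C.hy'y, one_mul]

lemma e_yinv (i : ℕ) : C.e i * C.yinv = C.yinv * C.e (i + 1) := by
  have h := C.yinv_e (i + 1)
  have h2 : i + 1 + (C.n - 1) = i + C.n := by have := C.hn2; omega
  rw [h, h2, C.hper]

lemma d_e (i : ℕ) : C.d * C.e i = C.e (i + (C.n - 1)) * C.d := by
  have h1 : C.e (i + (C.n - 1)) * C.d = C.d * C.e (i + (C.n - 1) + 1) := C.hed _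
  have h2 : i + (C.n - 1) + 1 = i + C.n := by have := C.hn2; omega
  rw [h1, h2, C.hper]

/-- the basic lowering factor -/
noncomputable def Lop (c : ℂ) : Q := C.d - c • C.yinv

lemma Lop_e (c : ℂ) (i : ℕ) : C.Lop c * C.e i = C.e (i + (C.n - 1)) * C.Lop c := by
  unfold Lop
  rw [sub_mul, mul_sub, C.d_e, smul_mul_assoc, C.yinv_e, mul_smul_comm]

lemma yinv_d : C.yinv * C.d = C.d * C.yinv + C.yinv * C.yinv := by
  have h : C.d * C.y = 1 + C.y * C.d := by
    have h0 := C.hWeyl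
    have : C.d * C.y - C.y * C.d + C.y * C.d = 1 + C.y * C.d := by rw [h0]
    simpa [sub_add_cancel] using this
  calc C.yinv * C.d = C.yinv * (C.d * (C.y * C.yinv)) := by rw [C.hyy', mul_one]
    _ = C.yinv * ((C.d * C.y) * C.yinv) := by rw [mul_assoc]
    _ = C.yinv * ((1 + C.y * C.d) * C.yinv) := by rw [h]
    _ = C.d * C.yinv + C.yinv * C.yinv := by
        rw [add_mul, one_mul, mul_add, ← mul_assoc, ← mul_assoc, C.hy'y, one_mul]
        rw [add_comm]

/-- the swap identity -/
lemma swap (c c' : ℂ) : C.Lop c * C.Lop c' = C.Lop (c' - 1) * C.Lop (c + 1) := by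
  unfold Lop
  have h := C.yinv_d
  rw [sub_mul, mul_sub, mul_sub, sub_mul, mul_sub, mul_sub]
  rw [smul_mul_assoc, smul_mul_assoc, smul_mul_assoc, smul_mul_assoc,
    mul_smul_comm, mul_smul_comm, mul_smul_comm, mul_smul_comm, h]
  rw [smul_add, smul_add, smul_smul, smul_smul]
  module

/-- ordered product of lowering factors -/
noncomputable def W (cs : List ℂ) : Q := (cs.map C.Lop).prod

@[simp] lemma W_nil : C.W [] = 1 := by simp [W]

@[simp] lemma W_cons (c : ℂ) (cs : List ℂ) : C.W (c :: cs) = C.Lop c * C.W cs := by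
  simp [W]

lemma W_e (cs : List ℂ) (i : ℕ) :
    C.W cs * C.e i = C.e (i + cs.length * (C.n - 1)) * C.W cs := by
  induction cs with
  | nil => simp
  | cons c cs ih =>
      rw [W_cons, mul_assoc, ih, ← mul_assoc, C.Lop_e, mul_assoc]
      have hidx : i + cs.length * (C.n - 1) + (C.n - 1)
          = i + (c :: cs).length * (C.n - 1) := by
        simp [List.length_cons]; ring
      rw [hidx]

/-- weight multiset of a list -/
noncomputable def MW : List ℂ → Multiset ℂ
  | [] => 0
  | c :: cs => c ::ₘ (MW cs).map (· - 1)

@[simp] lemma MW_nil : MW ([] : List ℂ) = 0 := rfl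
@[simp] lemma MW_cons (c : ℂ) (cs : List ℂ) : MW (c :: cs) = c ::ₘ (MW cs).map (· - 1) := rfl

lemma MW_card (cs : List ℂ) : Multiset.card (MW cs) = cs.length := by
  induction cs with
  | nil => simp
  | cons c cs ih => simp [ih]

lemma sub_one_inj : Function.Injective (fun x : ℂ => x - 1) := fun a b h => by
  rwa [sub_left_inj] at h

lemma pull' (cs : List ℂ) (a : ℂ) (ha : a ∈ MW cs) :
    ∃ cs₂ : List ℂ, C.W cs = C.Lop a * C.W cs₂ ∧
      (MW cs₂).map (· - 1) = (MW cs).erase a ∧ cs₂.length + 1 = cs.length := by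
  induction cs generalizing a with
  | nil => simp at ha
  | cons c cs ih =>
      by_cases hac : a = c
      · subst hac
        exact ⟨cs, by simp, by simp, by simp⟩
      · have ha' : a ∈ (MW cs).map (· - 1) := by
          rcases Multiset.mem_cons.mp ha with h | h
          · exact absurd h hac
          · exact h
        rcases Multiset.mem_map.mp ha' with ⟨b, hb, hba⟩
        have hb1 : a + 1 ∈ MW cs := by
          have : b = a + 1 := by rw [← hba]; ring
          rwa [← this]
        rcases ih (a + 1) hb1 with ⟨r₂, hW, hM, hlen⟩
        refine ⟨(c + 1) :: r₂, ?_, ?_, by simp [← hlen]⟩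
        · rw [W_cons, hW, ← mul_assoc, C.swap, W_cons, ← mul_assoc]
          norm_num
        · rw [MW_cons, Multiset.map_cons, MW_cons,
            Multiset.erase_cons_tail _ (fun h => hac h.symm)]
          congr 1
          · ring
          · rw [hM, Multiset.map_erase _ sub_one_inj]
            congr 1
            ring

lemma W_eq_of_MW_eq (cs₁ cs₂ : List ℂ) (h : MW cs₁ = MW cs₂) : C.W cs₁ = C.W cs₂ := by
  induction cs₂ generalizing cs₁ with
  | nil =>
      have : Multiset.card (MW cs₁) = 0 := by rw [h]; simp
      rw [MW_card] at this
      rw [List.length_eq_zero_iff.mp this]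
  | cons c cs ih =>
      have hc : c ∈ MW cs₁ := by rw [h]; simp
      rcases C.pull' cs₁ c hc with ⟨r₂, hW, hM, hlen⟩
      rw [hW, W_cons]
      congr 1
      apply ih
      apply Multiset.map_injective sub_one_inj
      rw [hM, h, MW_cons, Multiset.erase_cons_head]

lemma y_pow_e (a i : ℕ) : C.y ^ a * C.e i = C.e (i + a) * C.y ^ a := by
  induction a with
  | zero => simp
  | succ a ih =>
      rw [pow_succ', mul_assoc, ih, ← mul_assoc, C.hye, mul_assoc, ← pow_succ']
      have : i + a + 1 = i + (a + 1) := by omega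
      rw [this]

lemma e_yinv_pow (a i : ℕ) : C.e i * C.yinv ^ a = C.yinv ^ a * C.e (i + a) := by
  induction a with
  | zero => simp
  | succ a ih =>
      rw [pow_succ, ← mul_assoc, ih, mul_assoc, C.e_yinv, ← mul_assoc, ← pow_succ]
      have : i + a + 1 = i + (a + 1) := by omega
      rw [this]

lemma yinv_pow_e (a i : ℕ) : C.yinv ^ a * C.e i = C.e (i + a * (C.n - 1)) * C.yinv ^ a := by
  induction a with
  | zero => simp
  | succ a ih =>
      rw [pow_succ', mul_assoc, ih, ← mul_assoc, C.yinv_e, mul_assoc, ← pow_succ']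
      have : i + a * (C.n - 1) + (C.n - 1) = i + (a + 1) * (C.n - 1) := by ring
      rw [this]

lemma y_pow_yinv_pow (a : ℕ) : C.y ^ a * C.yinv ^ a = 1 := by
  induction a with
  | zero => simp
  | succ a ih =>
      rw [pow_succ, pow_succ']
      calc C.y ^ a * C.y * (C.yinv * C.yinv ^ a)
          = C.y ^ a * (C.y * C.yinv) * C.yinv ^ a := by noncomm_ring
        _ = 1 := by rw [C.hyy', mul_one, ih]

lemma yinv_pow_y_pow (a : ℕ) : C.yinv ^ a * C.y ^ a = 1 := by
  induction a with
  | zero => simp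
  | succ a ih =>
      rw [pow_succ', pow_succ]
      calc C.yinv * C.yinv ^ a * (C.y ^ a * C.y)
          = C.yinv * (C.yinv ^ a * C.y ^ a) * C.y := by noncomm_ring
        _ = 1 := by rw [ih, mul_one, C.hy'y]

lemma y_pow_succ_yinv (a : ℕ) : C.y ^ (a + 1) * C.yinv = C.y ^ a := by
  rw [pow_succ, mul_assoc, C.hyy', mul_one]

section Delta

variable (δ : Q) (κ : ℤ → ℂ)

/-- periodicity of κ along multiples of n -/
lemma kappa_congr (hκ : ∀ j : ℤ, κ (j + C.n) = κ j) {x y' : ℤ}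
    (h : (C.n : ℤ) ∣ (x - y')) : κ x = κ y' := by
  obtain ⟨t, ht⟩ := h
  have hx : x = y' + C.n * t := by linarith
  have haux : ∀ s : ℤ, κ (y' + C.n * s) = κ y' := by
    intro s
    induction s using Int.induction_on with
    | zero => simp
    | succ u ih =>
        have h1 : y' + (C.n : ℤ) * ((u : ℤ) + 1) = (y' + C.n * u) + C.n := by ring
        rw [h1, hκ]; exact ih
    | pred u ih =>
        have h1 : (y' + (C.n : ℤ) * (-(u : ℤ) - 1)) + C.n = y' + C.n * (-(u : ℤ)) := by ring
        have h2 := hκ (y' + C.n * (-(u : ℤ) - 1))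
        rw [h1] at h2
        rw [h2] at ih
        exact ih
  rw [hx]; exact haux t

lemma kappa_nat (hκ : ∀ j : ℤ, κ (j + C.n) = κ j) {i j : ℕ}
    (h : i % C.n = j % C.n) : κ i = κ j := by
  apply C.kappa_congr κ hκ
  have := (Nat.modEq_iff_dvd (n := C.n) (a := j) (b := i)).mp h.symm
  simpa using this

lemma delta_e_left (hδ : ∀ j : ℕ, δ * C.e j = C.Lop (κ j) * C.e j) (j : ℕ) :
    δ * C.e j = C.e (j + (C.n - 1)) * δ := by
  apply C.eq_of_mul_e
  intro l _
  have hLe := C.Lop_e (κ l) l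
  by_cases h : j % C.n = l % C.n
  · calc δ * C.e j * C.e l = C.Lop (κ l) * C.e l := by rw [mul_assoc, C.orth' h, hδ l]
      _ = C.e (l + (C.n - 1)) * C.Lop (κ l) := hLe
      _ = C.e (j + (C.n - 1)) * (C.e (l + (C.n - 1)) * C.Lop (κ l)) := by
          rw [← mul_assoc, C.orth' (Nat.ModEq.add_right (C.n - 1) h)]
      _ = C.e (j + (C.n - 1)) * (C.Lop (κ l) * C.e l) := by rw [hLe]
      _ = C.e (j + (C.n - 1)) * δ * C.e l := by rw [← hδ l, mul_assoc]
  · calc δ * C.e j * C.e l = 0 := by rw [mul_assoc, C.orth0 h, mul_zero]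
      _ = C.e (j + (C.n - 1)) * δ * C.e l := by
          rw [mul_assoc, hδ l, hLe, ← mul_assoc,
            C.orth0 (fun hc => h (Nat.ModEq.add_right_cancel' (C.n - 1) hc)), zero_mul]

lemma e_delta (hδ : ∀ j : ℕ, δ * C.e j = C.Lop (κ j) * C.e j) (i : ℕ) :
    C.e i * δ = δ * C.e (i + 1) := by
  apply C.eq_of_mul_e
  intro l _
  have hLe := C.Lop_e (κ l) l
  have h5 : i + 1 + (C.n - 1) = i + C.n := by have := C.hn2; omega
  have hmod : (i % C.n = (l + (C.n - 1)) % C.n) ↔ ((i + 1) % C.n = l % C.n) := by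
    constructor
    · intro h
      have h2 : (i + 1) % C.n = (l + (C.n - 1) + 1) % C.n := Nat.ModEq.add_right 1 h
      have h3 : l + (C.n - 1) + 1 = l + C.n := by have := C.hn2; omega
      rw [h3, Nat.add_mod_right] at h2
      exact h2
    · intro h
      have h4 : (i + 1 + (C.n - 1)) % C.n = (l + (C.n - 1)) % C.n :=
        Nat.ModEq.add_right (C.n - 1) h
      rw [h5, Nat.add_mod_right] at h4
      exact h4
  by_cases h : (i + 1) % C.n = l % C.n
  · calc C.e i * δ * C.e l = C.e i * (C.Lop (κ l) * C.e l) := by rw [mul_assoc, hδ l]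
      _ = C.e i * C.e (l + (C.n - 1)) * C.Lop (κ l) := by rw [hLe, ← mul_assoc]
      _ = C.e (l + (C.n - 1)) * C.Lop (κ l) := by rw [C.orth' (hmod.mpr h)]
      _ = C.Lop (κ l) * C.e l := hLe.symm
      _ = δ * C.e l := (hδ l).symm
      _ = δ * C.e (i + 1) * C.e l := by rw [mul_assoc, C.orth' h]
  · calc C.e i * δ * C.e l = C.e i * C.e (l + (C.n - 1)) * C.Lop (κ l) := by
          rw [mul_assoc, hδ l, hLe, ← mul_assoc]
      _ = 0 := by rw [C.orth0 (fun hc => h (hmod.mp hc)), zero_mul]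
      _ = δ * C.e (i + 1) * C.e l := by rw [mul_assoc, C.orth0 h, mul_zero]

lemma delta_pow_e (hδ : ∀ j : ℕ, δ * C.e j = C.Lop (κ j) * C.e j) (b j : ℕ) :
    δ ^ b * C.e j = C.e (j + b * (C.n - 1)) * δ ^ b := by
  induction b with
  | zero => simp
  | succ b ih =>
      rw [pow_succ', mul_assoc, ih, ← mul_assoc, C.delta_e_left δ κ hδ,
        mul_assoc, ← pow_succ']
      have : j + b * (C.n - 1) + (C.n - 1) = j + (b + 1) * (C.n - 1) := by ring
      rw [this]

lemma e_delta_pow (hδ : ∀ j : ℕ, δ * C.e j = C.Lop (κ j) * C.e j) (b i : ℕ) :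
    C.e i * δ ^ b = δ ^ b * C.e (i + b) := by
  induction b with
  | zero => simp
  | succ b ih =>
      rw [pow_succ, ← mul_assoc, ih, mul_assoc, C.e_delta δ κ hδ, ← mul_assoc,
        ← pow_succ]
      have : i + b + 1 = i + (b + 1) := by omega
      rw [this]

lemma d_y : C.d * C.y = 1 + C.y * C.d := by
  have h0 := C.hWeyl
  have : C.d * C.y - C.y * C.d + C.y * C.d = 1 + C.y * C.d := by rw [h0]
  simpa [sub_add_cancel] using this

end Delta

/-- the list of constants attached to a power of dk acting on e j -/
noncomputable def csl (κ : ℤ → ℂ) (j b : ℕ) : List ℂ :=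
  (List.range b).map fun t : ℕ => κ ((j : ℤ) - (b : ℤ) + 1 + (t : ℤ))

@[simp] lemma csl_zero (κ : ℤ → ℂ) (j : ℕ) : csl κ j 0 = [] := by simp [csl]

@[simp] lemma csl_length (κ : ℤ → ℂ) (j b : ℕ) : (csl κ j b).length = b := by
  unfold csl
  rw [List.length_map, List.length_range]

lemma csl_succ (κ : ℤ → ℂ) (j b : ℕ) :
    csl κ j (b + 1) = κ ((j : ℤ) - b) :: csl κ j b := by
  unfold csl
  rw [List.range_succ_eq_map, List.map_cons, List.map_map]
  congr 1
  · congr 1; push_cast; ring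
  · apply List.map_congr_left
    intro t _
    show κ ((j : ℤ) - ((b + 1 : ℕ) : ℤ) + 1 + ((Nat.succ t : ℕ) : ℤ))
        = κ ((j : ℤ) - (b : ℤ) + 1 + (t : ℤ))
    congr 1
    push_cast; ring

section Delta2

variable (δ : Q) (κ : ℤ → ℂ)

lemma delta_pow_W (hκ : ∀ j : ℤ, κ (j + C.n) = κ j)
    (hδ : ∀ j : ℕ, δ * C.e j = C.Lop (κ j) * C.e j) (b j : ℕ) :
    δ ^ b * C.e j = C.W (csl κ j b) * C.e j := by
  induction b with
  | zero => simp
  | succ b ih =>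
      have h1 : 1 ≤ C.n := le_trans one_le_two C.hn2
      set J := j + (csl κ j b).length * (C.n - 1) with hJ
      have hkJ : κ (J : ℤ) = κ ((j : ℤ) - b) := by
        apply C.kappa_congr κ hκ
        refine ⟨b, ?_⟩
        rw [hJ, csl_length]
        push_cast [Nat.cast_sub h1]
        ring
      rw [pow_succ', mul_assoc, ih, C.W_e, ← mul_assoc, hδ J, hkJ, mul_assoc,
        ← C.W_e, ← mul_assoc, ← W_cons, ← csl_succ]

lemma Ue (hκ : ∀ j : ℤ, κ (j + C.n) = κ j) (i : ℕ) :
    (∑ l ∈ range C.n, (1 + κ l - κ ((l : ℤ) + 1)) • C.e l) * C.e i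
      = (1 + κ i - κ ((i : ℤ) + 1)) • C.e i := by
  rw [Finset.sum_mul]
  have hmem : i % C.n ∈ range C.n := Finset.mem_range.mpr (Nat.mod_lt _ C.npos)
  rw [Finset.sum_eq_single (i % C.n)]
  · have hmm : (i % C.n) % C.n = i % C.n := Nat.mod_mod_of_dvd i dvd_rfl
    rw [smul_mul_assoc, C.orth' hmm]
    have hdvd : (C.n : ℤ) ∣ ((i % C.n : ℕ) : ℤ) - (i : ℤ) := by
      refine ⟨-((i / C.n : ℕ) : ℤ), ?_⟩
      have := Nat.mod_add_div i C.n
      have h2 : ((i % C.n : ℕ) : ℤ) + (C.n : ℤ) * ((i / C.n : ℕ) : ℤ) = (i : ℤ) := by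
        exact_mod_cast congrArg (Nat.cast : ℕ → ℤ) this
      linarith
    have hc1 : κ ((i % C.n : ℕ) : ℤ) = κ i := C.kappa_congr κ hκ hdvd
    have hc2 : κ (((i % C.n : ℕ) : ℤ) + 1) = κ ((i : ℤ) + 1) := by
      apply C.kappa_congr κ hκ
      obtain ⟨t, ht⟩ := hdvd
      exact ⟨t, by linarith⟩
    rw [hc1, hc2]
  · intro l hl hne
    have hlt := Finset.mem_range.mp hl
    rw [smul_mul_assoc, C.orth0 (by rw [Nat.mod_eq_of_lt hlt]; exact hne), smul_zero]
  · intro h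
    exact absurd hmem h

lemma delta_y (hκ : ∀ j : ℤ, κ (j + C.n) = κ j)
    (hδ : ∀ j : ℕ, δ * C.e j = C.Lop (κ j) * C.e j) :
    δ * C.y = C.y * δ + ∑ l ∈ range C.n, (1 + κ l - κ ((l : ℤ) + 1)) • C.e l := by
  apply C.eq_of_mul_e
  intro l _
  have hc : κ ((l + 1 : ℕ) : ℤ) = κ ((l : ℤ) + 1) := by push_cast; rfl
  have h1 : δ * C.y * C.e l
      = C.e l + C.y * C.d * C.e l - κ ((l : ℤ) + 1) • C.e l := by
    rw [mul_assoc, C.hye l, ← mul_assoc, hδ (l + 1), mul_assoc, ← C.hye l,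
      ← mul_assoc]
    unfold Lop
    rw [sub_mul, sub_mul, smul_mul_assoc, smul_mul_assoc, C.hy'y, C.d_y, hc]
    rw [add_mul, one_mul]
  have h2 : (C.y * δ + ∑ l' ∈ range C.n, (1 + κ l' - κ ((l' : ℤ) + 1)) • C.e l')
        * C.e l
      = C.e l + C.y * C.d * C.e l - κ ((l : ℤ) + 1) • C.e l := by
    rw [add_mul, mul_assoc, hδ l, C.Ue κ hκ l]
    unfold Lop
    rw [sub_mul, mul_sub, smul_mul_assoc, mul_smul_comm,
      ← mul_assoc C.y C.yinv (C.e l), C.hyy', one_mul, ← mul_assoc]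
    module
  rw [h1, h2]

lemma lemA (hκ : ∀ j : ℤ, κ (j + C.n) = κ j)
    (hδ : ∀ j : ℕ, δ * C.e j = C.Lop (κ j) * C.e j) (a i : ℕ) :
    ∃ lam : ℂ, δ * (C.y ^ (a + 1) * C.e i)
      = C.y ^ (a + 1) * (δ * C.e i) + lam • (C.y ^ a * C.e i) := by
  induction a with
  | zero =>
      refine ⟨1 + κ i - κ ((i : ℤ) + 1), ?_⟩
      rw [pow_one, pow_zero, one_mul, ← mul_assoc, C.delta_y δ κ hκ hδ, add_mul,
        mul_assoc, C.Ue κ hκ i]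
  | succ a ih =>
      obtain ⟨lam, hlam⟩ := ih
      refine ⟨lam + (1 + κ ((i + (a + 1) : ℕ)) - κ (((i + (a + 1) : ℕ) : ℤ) + 1)), ?_⟩
      have hstep : δ * (C.y ^ (a + 2) * C.e i)
          = C.y * (δ * (C.y ^ (a + 1) * C.e i))
            + (1 + κ ((i + (a + 1) : ℕ)) - κ (((i + (a + 1) : ℕ) : ℤ) + 1))
              • (C.y ^ (a + 1) * C.e i) := by
        rw [pow_succ', mul_assoc, ← mul_assoc δ, C.delta_y δ κ hκ hδ, add_mul,
          mul_assoc]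
        congr 1
        rw [C.y_pow_e (a + 1) i, ← mul_assoc, C.Ue κ hκ (i + (a + 1)),
          smul_mul_assoc, ← C.y_pow_e (a + 1) i]
      rw [hstep, hlam]
      rw [mul_add, mul_smul_comm, ← mul_assoc C.y (C.y ^ (a + 1)),
        ← pow_succ' C.y (a + 1), ← mul_assoc C.y (C.y ^ a), ← pow_succ' C.y a,
        add_smul]
      abel

end Delta2

/-- closed form for the weight multiset of `csl`. -/
lemma MW_csl (κ : ℤ → ℂ) (j b : ℕ) :
    MW (csl κ j b)
      = (Multiset.range b).map
          (fun t : ℕ => κ ((j : ℤ) - (t : ℤ)) + (t : ℂ) - ((b : ℂ) - 1)) := by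
  induction b with
  | zero => simp [MW]
  | succ b ih =>
      rw [csl_succ, MW_cons, ih, Multiset.range_succ, Multiset.map_cons]
      congr 1
      · push_cast; ring
      · rw [Multiset.map_map]
        apply Multiset.map_congr rfl
        intro t _
        show κ ((j : ℤ) - (t : ℤ)) + (t : ℂ) - ((b : ℂ) - 1) - 1
            = κ ((j : ℤ) - (t : ℤ)) + (t : ℂ) - (((b + 1 : ℕ) : ℂ) - 1)
        push_cast; ring

/-- block periodicity: the weight multisets agree for all multiples of n. -/
lemma MW_blocks {n : ℕ} (κ₁ κ₂ : ℤ → ℂ) (p : ℕ)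
    (hκ₁ : ∀ x y' : ℤ, (n : ℤ) ∣ (x - y') → κ₁ x = κ₁ y')
    (hκ₂ : ∀ x y' : ℤ, (n : ℤ) ∣ (x - y') → κ₂ x = κ₂ y')
    (Hμ : (Multiset.range n).map (fun u : ℕ => κ₁ ((p : ℤ) - u) + (u : ℂ))
        = (Multiset.range n).map (fun u : ℕ => κ₂ ((p : ℤ) - u) + (u : ℂ)))
    (q : ℕ) :
    (Multiset.range (q * n)).map (fun u : ℕ => κ₁ ((p : ℤ) - u) + (u : ℂ))
      = (Multiset.range (q * n)).map (fun u : ℕ => κ₂ ((p : ℤ) - u) + (u : ℂ)) := by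
  induction q with
  | zero => simp
  | succ q ih =>
      have hsplit : Multiset.range ((q + 1) * n)
          = Multiset.range (q * n) + (Multiset.range n).map (fun x => q * n + x) := by
        have h1 : (q + 1) * n = q * n + n := by ring
        rw [h1]
        show ((List.range (q * n + n) : List ℕ) : Multiset ℕ) = _
        rw [List.range_add]
        rw [← Multiset.coe_add, ← Multiset.map_coe]
        rfl
      rw [hsplit, Multiset.map_add, Multiset.map_add, ih, Multiset.map_map,
        Multiset.map_map]
      congr 1
      have key : ∀ (κ : ℤ → ℂ), (∀ x y' : ℤ, (n : ℤ) ∣ (x - y') → κ x = κ y') →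
          (Multiset.range n).map
              ((fun u : ℕ => κ ((p : ℤ) - u) + (u : ℂ)) ∘ fun x => q * n + x)
            = (Multiset.range n).map
              ((fun z : ℂ => z + (q * n : ℂ)) ∘ fun u : ℕ => κ ((p : ℤ) - u) + (u : ℂ)) := by
        intro κ hκ
        apply Multiset.map_congr rfl
        intro t _
        simp only [Function.comp_apply]
        have hk : κ ((p : ℤ) - ((q * n + t : ℕ) : ℤ)) = κ ((p : ℤ) - t) := by
          apply hκ
          refine ⟨-(q : ℤ), ?_⟩
          push_cast; ring
        rw [hk]
        push_cast; ring
      rw [key κ₁ hκ₁, key κ₂ hκ₂, ← Multiset.map_map, ← Multiset.map_map, Hμ]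

/-- the key identity: powers that are multiples of n agree on e p. -/
lemma key_identity (δ₁ δ₂ : Q) (κ₁ κ₂ : ℤ → ℂ)
    (hκ₁ : ∀ j : ℤ, κ₁ (j + C.n) = κ₁ j) (hκ₂ : ∀ j : ℤ, κ₂ (j + C.n) = κ₂ j)
    (hδ₁ : ∀ j : ℕ, δ₁ * C.e j = C.Lop (κ₁ j) * C.e j)
    (hδ₂ : ∀ j : ℕ, δ₂ * C.e j = C.Lop (κ₂ j) * C.e j)
    (p : ℕ)
    (Hμ : (Multiset.range C.n).map (fun u : ℕ => κ₁ ((p : ℤ) - u) + (u : ℂ))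
        = (Multiset.range C.n).map (fun u : ℕ => κ₂ ((p : ℤ) - u) + (u : ℂ)))
    (q : ℕ) :
    δ₁ ^ (q * C.n) * C.e p = δ₂ ^ (q * C.n) * C.e p := by
  rw [C.delta_pow_W δ₁ κ₁ hκ₁ hδ₁, C.delta_pow_W δ₂ κ₂ hκ₂ hδ₂]
  congr 1
  apply C.W_eq_of_MW_eq
  rw [MW_csl, MW_csl]
  have hb := MW_blocks κ₁ κ₂ p (fun x y' h => C.kappa_congr κ₁ hκ₁ h)
    (fun x y' h => C.kappa_congr κ₂ hκ₂ h) Hμ q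
  have h1 : ∀ (κ : ℤ → ℂ),
      (Multiset.range (q * C.n)).map
          (fun t : ℕ => κ ((p : ℤ) - (t : ℤ)) + (t : ℂ) - (((q * C.n : ℕ) : ℂ) - 1))
        = ((Multiset.range (q * C.n)).map
          (fun t : ℕ => κ ((p : ℤ) - (t : ℤ)) + (t : ℂ))).map
            (fun z => z - (((q * C.n : ℕ) : ℂ) - 1)) := by
    intro κ
    rw [Multiset.map_map]
    rfl
  rw [h1 κ₁, h1 κ₂, hb]

section Tsec

variable (δ : Q) (κ : ℤ → ℂ)

/-- graded pieces of the target compressed span -/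
noncomputable def Tsub (pp : ℕ) (q : ℤ) : Submodule ℂ Q :=
  Submodule.span ℂ
    {x | ∃ α β : ℕ, (α : ℤ) - (β : ℤ) = q ∧ x = C.y ^ α * δ ^ β * C.e pp}

lemma Tsub_gen {pp : ℕ} {q : ℤ} {α β : ℕ} (h : (α : ℤ) - (β : ℤ) = q) :
    C.y ^ α * δ ^ β * C.e pp ∈ C.Tsub δ pp q :=
  Submodule.subset_span ⟨α, β, h, rfl⟩

lemma T_step (hκ : ∀ j : ℤ, κ (j + C.n) = κ j)
    (hδ : ∀ j : ℕ, δ * C.e j = C.Lop (κ j) * C.e j) (pp : ℕ) (q : ℤ) (hq : 0 ≤ q)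
    {x : Q} (hx : x ∈ C.Tsub δ pp (q + 1)) : δ * x ∈ C.Tsub δ pp q := by
  have hmap : Submodule.map (LinearMap.mulLeft ℂ δ) (C.Tsub δ pp (q + 1))
      ≤ C.Tsub δ pp q := by
    rw [Tsub, Submodule.map_span, Submodule.span_le]
    rintro _ ⟨x, ⟨α, β, hab, rfl⟩, rfl⟩
    simp only [LinearMap.mulLeft_apply, SetLike.mem_coe]
    obtain ⟨α', rfl⟩ : ∃ α', α = α' + 1 := ⟨α - 1, by omega⟩
    obtain ⟨lam, hlam⟩ := C.lemA δ κ hκ hδ α' (pp + β * (C.n - 1))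
    have h2 : δ * (C.y ^ (α' + 1) * δ ^ β * C.e pp)
        = (δ * (C.y ^ (α' + 1) * C.e (pp + β * (C.n - 1)))) * δ ^ β := by
      rw [mul_assoc (C.y ^ (α' + 1)), C.delta_pow_e δ κ hδ β pp,
        ← mul_assoc (C.y ^ (α' + 1)), ← mul_assoc δ]
    have h3 : C.y ^ (α' + 1) * (δ * C.e (pp + β * (C.n - 1))) * δ ^ β
        = C.y ^ (α' + 1) * δ ^ (β + 1) * C.e pp := by
      rw [mul_assoc (C.y ^ (α' + 1)), mul_assoc δ, ← C.delta_pow_e δ κ hδ β pp,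
        ← mul_assoc δ, ← pow_succ', ← mul_assoc, mul_assoc (C.y ^ (α' + 1))]
    have h4 : C.y ^ α' * C.e (pp + β * (C.n - 1)) * δ ^ β
        = C.y ^ α' * δ ^ β * C.e pp := by
      rw [mul_assoc, ← C.delta_pow_e δ κ hδ β pp, ← mul_assoc]
    rw [h2, hlam, add_mul, smul_mul_assoc, h3, h4]
    exact Submodule.add_mem _ (C.Tsub_gen δ (by push_cast at hab ⊢; omega))
      (Submodule.smul_mem _ _ (C.Tsub_gen δ (by push_cast at hab ⊢; omega)))
  exact hmap ⟨x, hx, rfl⟩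

lemma Pprime (hκ : ∀ j : ℤ, κ (j + C.n) = κ j)
    (hδ : ∀ j : ℕ, δ * C.e j = C.Lop (κ j) * C.e j) (pp : ℕ) :
    ∀ (cs : List ℂ) (a : ℕ), cs.length ≤ a →
      C.y ^ a * C.W cs * C.e pp ∈ C.Tsub δ pp ((a : ℤ) - cs.length) := by
  intro cs
  induction cs with
  | nil =>
      intro a _
      simpa using C.Tsub_gen δ (α := a) (β := 0) (by simp)
  | cons c cs₁ ih =>
      intro a ha
      simp only [List.length_cons] at ha
      obtain ⟨a', rfl⟩ : ∃ a', a = a' + 1 := ⟨a - 1, by omega⟩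
      have hlen : cs₁.length ≤ a' := by omega
      have hWe := C.W_e cs₁ pp
      set J := pp + cs₁.length * (C.n - 1) with hJ
      set c₀ := κ (J : ℤ) with hc₀
      obtain ⟨lam, hlam⟩ := C.lemA δ κ hκ hδ a' J
      have hsplit : C.Lop c = C.Lop c₀ + (c₀ - c) • C.yinv := by
        unfold Lop
        rw [sub_smul]
        abel
      have hexp : C.y ^ (a' + 1) * C.W (c :: cs₁) * C.e pp
          = C.y ^ (a' + 1) * C.Lop c₀ * (C.W cs₁ * C.e pp)
            + (c₀ - c) • (C.y ^ a' * (C.W cs₁ * C.e pp)) := by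
        rw [W_cons, hsplit]
        rw [add_mul, mul_add, add_mul]
        congr 1
        · rw [← mul_assoc, mul_assoc]
        · rw [smul_mul_assoc, mul_smul_comm, smul_mul_assoc]
          congr 1
          rw [← mul_assoc, C.y_pow_succ_yinv, mul_assoc]
      have hsub : C.y ^ (a' + 1) * (δ * C.e J)
          = δ * (C.y ^ (a' + 1) * C.e J) - lam • (C.y ^ a' * C.e J) := by
        rw [eq_sub_iff_add_eq, ← hlam]
      have hfirst : C.y ^ (a' + 1) * C.Lop c₀ * (C.W cs₁ * C.e pp)
          = δ * (C.y ^ (a' + 1) * (C.W cs₁ * C.e pp))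
            - lam • (C.y ^ a' * (C.W cs₁ * C.e pp)) := by
        calc C.y ^ (a' + 1) * C.Lop c₀ * (C.W cs₁ * C.e pp)
            = C.y ^ (a' + 1) * C.Lop c₀ * (C.e J * C.W cs₁) := by rw [hWe]
          _ = C.y ^ (a' + 1) * (C.Lop c₀ * C.e J) * C.W cs₁ := by
              rw [mul_assoc, mul_assoc, mul_assoc]
          _ = C.y ^ (a' + 1) * (δ * C.e J) * C.W cs₁ := by rw [← hδ J]
          _ = (δ * (C.y ^ (a' + 1) * C.e J) - lam • (C.y ^ a' * C.e J)) * C.W cs₁ := by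
              rw [hsub]
          _ = δ * (C.y ^ (a' + 1) * (C.e J * C.W cs₁))
              - lam • (C.y ^ a' * (C.e J * C.W cs₁)) := by
              simp only [sub_mul, smul_mul_assoc, mul_assoc]
          _ = δ * (C.y ^ (a' + 1) * (C.W cs₁ * C.e pp))
              - lam • (C.y ^ a' * (C.W cs₁ * C.e pp)) := by rw [hWe]
      rw [hexp, hfirst]
      have hmem2 : C.y ^ a' * (C.W cs₁ * C.e pp)
          ∈ C.Tsub δ pp (((a' + 1 : ℕ) : ℤ) - ((c :: cs₁).length : ℤ)) := by
        have := ih a' hlen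
        rw [mul_assoc] at this
        have hq : ((a' : ℕ) : ℤ) - (cs₁.length : ℤ)
            = ((a' + 1 : ℕ) : ℤ) - ((c :: cs₁).length : ℤ) := by
          simp only [List.length_cons]; push_cast; ring
        rwa [hq] at this
      have hmem1' : δ * (C.y ^ (a' + 1) * (C.W cs₁ * C.e pp))
          ∈ C.Tsub δ pp (((a' + 1 : ℕ) : ℤ) - ((c :: cs₁).length : ℤ)) := by
        have hmem1 := ih (a' + 1) (by omega)
        rw [mul_assoc] at hmem1
        have hq : ((a' + 1 : ℕ) : ℤ) - (cs₁.length : ℤ)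
            = (((a' + 1 : ℕ) : ℤ) - ((c :: cs₁).length : ℤ)) + 1 := by
          simp only [List.length_cons]; push_cast; ring
        rw [hq] at hmem1
        exact C.T_step δ κ hκ hδ pp _
          (by simp only [List.length_cons]; push_cast; omega) hmem1
      exact Submodule.add_mem _
        (Submodule.sub_mem _ hmem1' (Submodule.smul_mem _ _ hmem2))
        (Submodule.smul_mem _ _ hmem2)

end Tsec

lemma e_y_pow (a i : ℕ) : C.e i * C.y ^ a = C.y ^ a * C.e (i + a * (C.n - 1)) := by
  induction a with
  | zero => simp
  | succ a ih =>
      rw [pow_succ, ← mul_assoc, ih, mul_assoc, C.e_y, ← mul_assoc, ← pow_succ]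
      have : i + a * (C.n - 1) + (C.n - 1) = i + (a + 1) * (C.n - 1) := by ring
      rw [this]

section Span

variable (δ : Q) (κ : ℤ → ℂ)

/-- the PBW-style spanning submodule for H -/
noncomputable def Ssub : Submodule ℂ Q :=
  Submodule.span ℂ {x | ∃ a b i : ℕ, x = C.y ^ a * δ ^ b * C.e i}

lemma Ssub_gen (a b i : ℕ) : C.y ^ a * δ ^ b * C.e i ∈ C.Ssub δ :=
  Submodule.subset_span ⟨a, b, i, rfl⟩

lemma Ssub_yL (a : ℕ) {x : Q} (hx : x ∈ C.Ssub δ) : C.y ^ a * x ∈ C.Ssub δ := by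
  have hmap : Submodule.map (LinearMap.mulLeft ℂ (C.y ^ a)) (C.Ssub δ)
      ≤ C.Ssub δ := by
    rw [Ssub, Submodule.map_span, Submodule.span_le]
    rintro _ ⟨x, ⟨a', b, i, rfl⟩, rfl⟩
    simp only [LinearMap.mulLeft_apply, SetLike.mem_coe]
    have : C.y ^ a * (C.y ^ a' * δ ^ b * C.e i) = C.y ^ (a + a') * δ ^ b * C.e i := by
      rw [← mul_assoc, ← mul_assoc, ← pow_add]
    rw [this]
    exact C.Ssub_gen δ _ _ _
  exact hmap ⟨x, hx, rfl⟩

lemma Ssub_deltaR (hδ : ∀ j : ℕ, δ * C.e j = C.Lop (κ j) * C.e j)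
    {x : Q} (hx : x ∈ C.Ssub δ) : x * δ ∈ C.Ssub δ := by
  have hmap : Submodule.map (LinearMap.mulRight ℂ δ) (C.Ssub δ) ≤ C.Ssub δ := by
    rw [Ssub, Submodule.map_span, Submodule.span_le]
    rintro _ ⟨x, ⟨a, b, i, rfl⟩, rfl⟩
    simp only [LinearMap.mulRight_apply, SetLike.mem_coe]
    have : C.y ^ a * δ ^ b * C.e i * δ = C.y ^ a * δ ^ (b + 1) * C.e (i + 1) := by
      rw [mul_assoc, mul_assoc, C.e_delta δ κ hδ i, ← mul_assoc, ← mul_assoc,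
        mul_assoc (C.y ^ a), ← pow_succ]
    rw [this]
    exact C.Ssub_gen δ _ _ _
  exact hmap ⟨x, hx, rfl⟩

lemma Ssub_deltaPowR (hδ : ∀ j : ℕ, δ * C.e j = C.Lop (κ j) * C.e j) (m : ℕ)
    {x : Q} (hx : x ∈ C.Ssub δ) : x * δ ^ m ∈ C.Ssub δ := by
  induction m with
  | zero => simpa using hx
  | succ m ih =>
      rw [pow_succ, ← mul_assoc]
      exact C.Ssub_deltaR δ κ hδ ih

lemma Ssub_eR (j : ℕ) {x : Q} (hx : x ∈ C.Ssub δ) : x * C.e j ∈ C.Ssub δ := by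
  have hmap : Submodule.map (LinearMap.mulRight ℂ (C.e j)) (C.Ssub δ)
      ≤ C.Ssub δ := by
    rw [Ssub, Submodule.map_span, Submodule.span_le]
    rintro _ ⟨x, ⟨a, b, i, rfl⟩, rfl⟩
    simp only [LinearMap.mulRight_apply, SetLike.mem_coe]
    rw [mul_assoc, mul_assoc, C.horth]
    by_cases h : i % C.n = j % C.n
    · rw [if_pos h, ← mul_assoc]
      exact C.Ssub_gen δ _ _ _
    · rw [if_neg h, mul_zero, mul_zero]
      exact Submodule.zero_mem _
  exact hmap ⟨x, hx, rfl⟩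

lemma lemC (hκ : ∀ j : ℤ, κ (j + C.n) = κ j)
    (hδ : ∀ j : ℕ, δ * C.e j = C.Lop (κ j) * C.e j) :
    ∀ a b i : ℕ, δ ^ b * (C.y ^ a * C.e i) ∈ C.Ssub δ := by
  intro a
  induction a with
  | zero =>
      intro b i
      have : δ ^ b * (C.y ^ 0 * C.e i) = C.y ^ 0 * δ ^ b * C.e i := by
        rw [pow_zero, one_mul, one_mul]
      rw [this]
      exact C.Ssub_gen δ _ _ _
  | succ a iha =>
      intro b
      induction b with
      | zero =>
          intro i
          have : δ ^ 0 * (C.y ^ (a + 1) * C.e i)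
              = C.y ^ (a + 1) * δ ^ 0 * C.e i := by
            rw [pow_zero, one_mul, mul_one]
          rw [this]
          exact C.Ssub_gen δ _ _ _
      | succ b ihb =>
          intro i
          obtain ⟨lam, hlam⟩ := C.lemA δ κ hκ hδ a i
          have h1 : δ ^ (b + 1) * (C.y ^ (a + 1) * C.e i)
              = δ ^ b * (C.y ^ (a + 1) * (δ * C.e i))
                + lam • (δ ^ b * (C.y ^ a * C.e i)) := by
            rw [pow_succ, mul_assoc, hlam, mul_add, mul_smul_comm]
          rw [h1]
          refine Submodule.add_mem _ ?_ (Submodule.smul_mem _ _ (iha b i))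
          have h2 : δ ^ b * (C.y ^ (a + 1) * (δ * C.e i))
              = (δ ^ b * (C.y ^ (a + 1) * C.e (i + (C.n - 1)))) * δ := by
            rw [C.delta_e_left δ κ hδ i, ← mul_assoc, ← mul_assoc, ← mul_assoc]
          rw [h2]
          exact C.Ssub_deltaR δ κ hδ (ihb (i + (C.n - 1)))

lemma Ssub_one : (1 : Q) ∈ C.Ssub δ := by
  rw [← C.hsum]
  refine Submodule.sum_mem _ ?_
  intro i _
  simpa using C.Ssub_gen δ 0 0 i

lemma Ssub_mul (hκ : ∀ j : ℤ, κ (j + C.n) = κ j)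
    (hδ : ∀ j : ℕ, δ * C.e j = C.Lop (κ j) * C.e j)
    {x z : Q} (hx : x ∈ C.Ssub δ) (hz : z ∈ C.Ssub δ) : x * z ∈ C.Ssub δ := by
  have hle : C.Ssub δ * C.Ssub δ ≤ C.Ssub δ := by
    rw [Ssub, Submodule.span_mul_span, Submodule.span_le]
    rintro _ ⟨x, ⟨a, b, i, rfl⟩, z, ⟨a', b', j, rfl⟩, rfl⟩
    simp only [SetLike.mem_coe]
    have key : C.y ^ a * δ ^ b * C.e i * (C.y ^ a' * δ ^ b' * C.e j)
        = C.y ^ a * (δ ^ b * (C.y ^ a' * (δ ^ b'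
            * (C.e (i + a' * (C.n - 1) + b') * C.e j)))) := by
      rw [mul_assoc (C.y ^ a * δ ^ b), ← mul_assoc (C.e i), ← mul_assoc (C.e i),
        C.e_y_pow, mul_assoc (C.y ^ a'), C.e_delta_pow δ κ hδ]
      simp only [mul_assoc]
    rw [key, C.horth]
    by_cases h : (i + a' * (C.n - 1) + b') % C.n = j % C.n
    · rw [if_pos h]
      apply C.Ssub_yL δ a
      have h3 : δ ^ b * (C.y ^ a' * (δ ^ b' * C.e j))
          = (δ ^ b * (C.y ^ a' * C.e (j + b' * (C.n - 1)))) * δ ^ b' := by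
        rw [C.delta_pow_e δ κ hδ b' j, ← mul_assoc, ← mul_assoc, ← mul_assoc]
      rw [h3]
      exact C.Ssub_deltaPowR δ κ hδ b' (C.lemC δ κ hκ hδ a' b (j + b' * (C.n - 1)))
    · rw [if_neg h]
      simp only [mul_zero]
      exact Submodule.zero_mem _
  exact hle (Submodule.mul_mem_mul hx hz)

lemma adjoin_le_Ssub (hκ : ∀ j : ℤ, κ (j + C.n) = κ j)
    (hδ : ∀ j : ℕ, δ * C.e j = C.Lop (κ j) * C.e j) :
    ∀ x ∈ Algebra.adjoin ℂ {δ, C.y, C.γ}, x ∈ C.Ssub δ := by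
  have hd : δ ∈ C.Ssub δ := by
    have h : δ = ∑ i ∈ range C.n, C.y ^ 0 * δ ^ 1 * C.e i := by
      have : ∀ i : ℕ, C.y ^ 0 * δ ^ 1 * C.e i = δ * C.e i := by
        intro i; rw [pow_zero, one_mul, pow_one]
      rw [Finset.sum_congr rfl (fun i _ => this i), ← Finset.mul_sum, C.hsum,
        mul_one]
    nth_rewrite 2 [h]
    exact Submodule.sum_mem _ fun i _ => C.Ssub_gen δ _ _ _
  have hy : C.y ∈ C.Ssub δ := by
    have h : C.y = ∑ i ∈ range C.n, C.y ^ 1 * δ ^ 0 * C.e i := by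
      have : ∀ i : ℕ, C.y ^ 1 * δ ^ 0 * C.e i = C.y * C.e i := by
        intro i; rw [pow_one, pow_zero, mul_one]
      rw [Finset.sum_congr rfl (fun i _ => this i), ← Finset.mul_sum, C.hsum,
        mul_one]
    rw [h]
    exact Submodule.sum_mem _ fun i _ => C.Ssub_gen δ _ _ _
  have hg : C.γ ∈ C.Ssub δ := by
    obtain ⟨cg, hcg⟩ := C.hγe
    rw [hcg]
    refine Submodule.sum_mem _ fun i _ => Submodule.smul_mem _ _ ?_
    simpa using C.Ssub_gen δ 0 0 i
  have halg : Algebra.adjoin ℂ {δ, C.y, C.γ}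
      ≤ Submodule.toSubalgebra (C.Ssub δ) (C.Ssub_one δ)
          (fun x z hx hz => C.Ssub_mul δ κ hκ hδ hx hz) := by
    rw [Algebra.adjoin_le_iff]
    intro g hgmem
    simp only [Set.mem_insert_iff, Set.mem_singleton_iff] at hgmem
    rcases hgmem with h | h | h
    · rw [h]; exact (Submodule.mem_toSubalgebra).mpr hd
    · rw [h]; exact (Submodule.mem_toSubalgebra).mpr hy
    · rw [h]; exact (Submodule.mem_toSubalgebra).mpr hg
  intro x hx
  exact (Submodule.mem_toSubalgebra).mp (halg hx)

end Span

/-- compression by e pp on both sides, as a linear map -/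
noncomputable def Ep (pp : ℕ) : Q →ₗ[ℂ] Q :=
  (LinearMap.mulRight ℂ (C.e pp)).comp (LinearMap.mulLeft ℂ (C.e pp))

@[simp] lemma Ep_apply (pp : ℕ) (x : Q) : C.Ep pp x = C.e pp * x * C.e pp := rfl

lemma modAB (pp a b : ℕ) :
    (pp + b * (C.n - 1) + a) % C.n = pp % C.n ↔ a % C.n = b % C.n := by
  have hbn : pp + b * (C.n - 1) + a + b = pp + a + b * C.n := by
    have h1 : C.n - 1 + 1 = C.n := by have := C.hn2; omega
    calc pp + b * (C.n - 1) + a + b = pp + a + b * ((C.n - 1) + 1) := by ring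
      _ = pp + a + b * C.n := by rw [h1]
  constructor
  · intro h
    have h2 : (pp + b * (C.n - 1) + a + b) % C.n = (pp + b) % C.n :=
      Nat.ModEq.add_right b h
    rw [hbn, Nat.add_mul_mod_self_right] at h2
    exact Nat.ModEq.add_left_cancel' pp h2
  · intro h
    have h2 : (pp + a) % C.n = (pp + b) % C.n := Nat.ModEq.add_left pp h
    have h3 : (pp + b * (C.n - 1) + a + b) % C.n = (pp + b) % C.n := by
      rw [hbn, Nat.add_mul_mod_self_right]; exact h2
    exact Nat.ModEq.add_right_cancel' b h3

section Compress

variable (δ : Q) (κ : ℤ → ℂ)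

lemma gen_move (hδ : ∀ j : ℕ, δ * C.e j = C.Lop (κ j) * C.e j) (pp α β : ℕ) :
    C.y ^ α * δ ^ β * C.e pp
      = C.e (pp + β * (C.n - 1) + α) * (C.y ^ α * δ ^ β) := by
  rw [mul_assoc, C.delta_pow_e δ κ hδ β pp, ← mul_assoc, C.y_pow_e, mul_assoc]

lemma e_comp_gen (hδ : ∀ j : ℕ, δ * C.e j = C.Lop (κ j) * C.e j) (pp α β : ℕ)
    (h : α % C.n = β % C.n) :
    C.e pp * (C.y ^ α * δ ^ β) * C.e pp = C.y ^ α * δ ^ β * C.e pp := by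
  rw [mul_assoc, C.gen_move δ κ hδ pp α β, ← mul_assoc,
    C.orth' ((C.modAB pp α β).mpr h).symm, ← C.gen_move δ κ hδ pp α β]

/-- the balanced compressed span for the target -/
noncomputable def Vsub (pp : ℕ) : Submodule ℂ Q :=
  Submodule.span ℂ
    {x | ∃ α β : ℕ, α % C.n = β % C.n ∧ x = C.y ^ α * δ ^ β * C.e pp}

lemma Vsub_gen {pp α β : ℕ} (h : α % C.n = β % C.n) :
    C.y ^ α * δ ^ β * C.e pp ∈ C.Vsub δ pp :=
  Submodule.subset_span ⟨α, β, h, rfl⟩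

lemma V_le (hδ : ∀ j : ℕ, δ * C.e j = C.Lop (κ j) * C.e j) (pp : ℕ) :
    C.Vsub δ pp ≤ Submodule.map (C.Ep pp)
      (Subalgebra.toSubmodule (Algebra.adjoin ℂ {δ, C.y, C.γ})) := by
  rw [Vsub, Submodule.span_le]
  rintro _ ⟨α, β, h, rfl⟩
  refine ⟨C.y ^ α * δ ^ β, ?_, ?_⟩
  · have h1 : C.y ∈ Algebra.adjoin ℂ {δ, C.y, C.γ} :=
      Algebra.subset_adjoin (by simp)
    have h2 : δ ∈ Algebra.adjoin ℂ {δ, C.y, C.γ} :=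
      Algebra.subset_adjoin (by simp)
    exact (Subalgebra.mem_toSubmodule _).mpr (mul_mem (pow_mem h1 α) (pow_mem h2 β))
  · exact C.e_comp_gen δ κ hδ pp α β h

lemma Tsub_le_V (pp : ℕ) {q : ℤ} (hq : (C.n : ℤ) ∣ q) :
    C.Tsub δ pp q ≤ C.Vsub δ pp := by
  rw [Tsub, Submodule.span_le]
  rintro _ ⟨α, β, hab, rfl⟩
  refine Submodule.subset_span ⟨α, β, ?_, rfl⟩
  have : (C.n : ℤ) ∣ ((β : ℤ) - (α : ℤ)) := by
    obtain ⟨t, ht⟩ := hq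
    exact ⟨-t, by linarith⟩
  exact (Nat.modEq_iff_dvd).mpr this

lemma TV (hκ : ∀ j : ℤ, κ (j + C.n) = κ j)
    (hδ : ∀ j : ℕ, δ * C.e j = C.Lop (κ j) * C.e j) (pp m : ℕ)
    (hm : m % C.n = 0) {x : Q} (hx : x ∈ C.Tsub δ pp 0) :
    x * δ ^ m ∈ C.Vsub δ pp := by
  have hmap : Submodule.map (LinearMap.mulRight ℂ (δ ^ m)) (C.Tsub δ pp 0)
      ≤ C.Vsub δ pp := by
    rw [Tsub, Submodule.map_span, Submodule.span_le]
    rintro _ ⟨x, ⟨α, β, hab, rfl⟩, rfl⟩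
    simp only [LinearMap.mulRight_apply, SetLike.mem_coe]
    have hepm : C.e (pp + m) = C.e pp := by
      apply C.e_congr
      conv_lhs => rw [Nat.add_mod, hm, Nat.add_zero, Nat.mod_mod_of_dvd pp dvd_rfl]
    have key : C.y ^ α * δ ^ β * C.e pp * δ ^ m
        = C.y ^ α * δ ^ (β + m) * C.e pp := by
      rw [mul_assoc (C.y ^ α * δ ^ β), C.e_delta_pow δ κ hδ m pp, hepm,
        ← mul_assoc, mul_assoc (C.y ^ α), ← pow_add]
    rw [key]
    apply C.Vsub_gen δ
    have hα : α = β := by omega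
    have hbm : (β + m) % C.n = β % C.n := by
      conv_lhs => rw [Nat.add_mod, hm, Nat.add_zero, Nat.mod_mod_of_dvd β dvd_rfl]
    rw [hα, hbm]
  exact hmap ⟨x, hx, rfl⟩

end Compress

section Main

variable (δ₁ δ₂ : Q) (κ₁ κ₂ : ℤ → ℂ)

/-- crux: balanced monomials in δ₁ land in the δ₂-span. -/
lemma gen_incl (hκ₁ : ∀ j : ℤ, κ₁ (j + C.n) = κ₁ j)
    (hκ₂ : ∀ j : ℤ, κ₂ (j + C.n) = κ₂ j)
    (hδ₁ : ∀ j : ℕ, δ₁ * C.e j = C.Lop (κ₁ j) * C.e j)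
    (hδ₂ : ∀ j : ℕ, δ₂ * C.e j = C.Lop (κ₂ j) * C.e j)
    (pp : ℕ)
    (Hμ : (Multiset.range C.n).map (fun u : ℕ => κ₁ ((pp : ℤ) - u) + (u : ℂ))
        = (Multiset.range C.n).map (fun u : ℕ => κ₂ ((pp : ℤ) - u) + (u : ℂ)))
    (a b : ℕ) (h : a % C.n = b % C.n) :
    C.y ^ a * δ₁ ^ b * C.e pp ∈ C.Vsub δ₂ pp := by
  by_cases hba : b ≤ a
  · have hdvd : C.n ∣ a - b := (Nat.modEq_iff_dvd' hba).mp h.symm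
    have hx : C.y ^ a * δ₁ ^ b * C.e pp
        = C.y ^ a * C.W (csl κ₁ pp b) * C.e pp := by
      rw [mul_assoc, C.delta_pow_W δ₁ κ₁ hκ₁ hδ₁ b pp, ← mul_assoc]
    rw [hx]
    have hT := C.Pprime δ₂ κ₂ hκ₂ hδ₂ pp (csl κ₁ pp b) a (by simp [hba])
    have hTq : ((a : ℤ) - ((csl κ₁ pp b).length : ℤ)) = ((a : ℤ) - (b : ℤ)) := by
      rw [csl_length]
    rw [hTq] at hT
    refine C.Tsub_le_V δ₂ pp ?_ hT
    obtain ⟨t, ht⟩ := hdvd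
    exact ⟨t, by push_cast; omega⟩
  · push_neg at hba
    set m := b - a with hm
    have hb : b = a + m := by omega
    have hmdvd : C.n ∣ m := by
      have := (Nat.modEq_iff_dvd' (le_of_lt hba)).mp h
      exact this
    obtain ⟨q', hq'⟩ := hmdvd
    have hkey : δ₁ ^ m * C.e pp = δ₂ ^ m * C.e pp := by
      rw [hq', Nat.mul_comm]
      exact C.key_identity δ₁ δ₂ κ₁ κ₂ hκ₁ hκ₂ hδ₁ hδ₂ pp Hμ q'
    have hepm : C.e (pp + m * (C.n - 1)) = C.e pp := by
      apply C.e_congr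
      have : C.n ∣ m * (C.n - 1) := Dvd.dvd.mul_right ⟨q', hq'⟩ _
      obtain ⟨t, ht⟩ := this
      rw [ht, Nat.add_mul_mod_self_left]
    have hswap : δ₂ ^ m * C.e pp = C.e pp * δ₂ ^ m := by
      rw [C.delta_pow_e δ₂ κ₂ hδ₂ m pp, hepm]
    have hx : C.y ^ a * δ₁ ^ b * C.e pp
        = (C.y ^ a * C.W (csl κ₁ pp a) * C.e pp) * δ₂ ^ m := by
      rw [hb, pow_add, mul_assoc (C.y ^ a), mul_assoc (δ₁ ^ a), hkey, hswap,
        ← mul_assoc (δ₁ ^ a), ← mul_assoc (C.y ^ a),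
        mul_assoc (C.y ^ a), C.delta_pow_W δ₁ κ₁ hκ₁ hδ₁ a pp,
        ← mul_assoc (C.y ^ a), ← mul_assoc (C.y ^ a)]
    rw [hx]
    have hT := C.Pprime δ₂ κ₂ hκ₂ hδ₂ pp (csl κ₁ pp a) a (by simp)
    have hTq : ((a : ℤ) - ((csl κ₁ pp a).length : ℤ)) = 0 := by
      rw [csl_length]; ring
    rw [hTq] at hT
    exact C.TV δ₂ κ₂ hκ₂ hδ₂ pp m (by rw [hq']; exact Nat.mul_mod_right C.n q') hT

/-- main inclusion between compressed subalgebras. -/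
lemma main_incl (hκ₁ : ∀ j : ℤ, κ₁ (j + C.n) = κ₁ j)
    (hκ₂ : ∀ j : ℤ, κ₂ (j + C.n) = κ₂ j)
    (hδ₁ : ∀ j : ℕ, δ₁ * C.e j = C.Lop (κ₁ j) * C.e j)
    (hδ₂ : ∀ j : ℕ, δ₂ * C.e j = C.Lop (κ₂ j) * C.e j)
    (pp : ℕ)
    (Hμ : (Multiset.range C.n).map (fun u : ℕ => κ₁ ((pp : ℤ) - u) + (u : ℂ))
        = (Multiset.range C.n).map (fun u : ℕ => κ₂ ((pp : ℤ) - u) + (u : ℂ)))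
    {x : Q} (hx : x ∈ Algebra.adjoin ℂ {δ₁, C.y, C.γ}) :
    ∃ z ∈ Algebra.adjoin ℂ {δ₂, C.y, C.γ},
      C.e pp * x * C.e pp = C.e pp * z * C.e pp := by
  have hx1 : x ∈ C.Ssub δ₁ := C.adjoin_le_Ssub δ₁ κ₁ hκ₁ hδ₁ x hx
  have hEx : C.Ep pp x ∈ Submodule.map (C.Ep pp) (C.Ssub δ₁) := ⟨x, hx1, rfl⟩
  have hmap : Submodule.map (C.Ep pp) (C.Ssub δ₁)
      ≤ Submodule.map (C.Ep pp)
          (Subalgebra.toSubmodule (Algebra.adjoin ℂ {δ₂, C.y, C.γ})) := by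
    rw [Ssub, Submodule.map_span, Submodule.span_le]
    rintro _ ⟨x, ⟨a, b, i, rfl⟩, rfl⟩
    simp only [SetLike.mem_coe, Ep_apply]
    have hsplit : C.e pp * (C.y ^ a * δ₁ ^ b * C.e i) * C.e pp
        = C.e pp * (C.y ^ a * δ₁ ^ b) * (C.e i * C.e pp) := by
      simp only [mul_assoc]
    rw [hsplit, C.horth]
    by_cases h1 : i % C.n = pp % C.n
    · rw [if_pos h1]
      by_cases h2 : a % C.n = b % C.n
      · have habs : C.e pp * (C.y ^ a * δ₁ ^ b) * C.e pp
            = C.y ^ a * δ₁ ^ b * C.e pp := C.e_comp_gen δ₁ κ₁ hδ₁ pp a b h2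
        rw [habs]
        have hv : C.y ^ a * δ₁ ^ b * C.e pp ∈ C.Vsub δ₂ pp :=
          C.gen_incl δ₁ δ₂ κ₁ κ₂ hκ₁ hκ₂ hδ₁ hδ₂ pp Hμ a b h2
        exact C.V_le δ₂ κ₂ hδ₂ pp hv
      · have habs : C.e pp * (C.y ^ a * δ₁ ^ b) * C.e pp = 0 := by
          rw [mul_assoc, C.gen_move δ₁ κ₁ hδ₁ pp a b,
            ← mul_assoc, C.orth0 (fun hc => h2 ((C.modAB pp a b).mp hc.symm)),
            zero_mul]
        rw [habs]
        exact Submodule.zero_mem _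
    · rw [if_neg h1, mul_zero]
      exact Submodule.zero_mem _
  obtain ⟨z, hz, hez⟩ := hmap hEx
  exact ⟨z, (Subalgebra.mem_toSubmodule _).mp hz, by
    have h1 : C.Ep pp x = C.Ep pp z := hez.symm
    simpa using h1⟩

end Main

end Ctx

section Build

variable {Q : Type*} [Ring Q] [Algebra ℂ Q]

lemma omega_pow_n {n : ℕ} (hn : 0 < n) : omegaRoot n ^ n = 1 :=
  (Complex.isPrimitiveRoot_exp n hn.ne').pow_eq_one

lemma geom_omega {n : ℕ} (hn : 0 < n) (r : ℕ) :
    ∑ j ∈ range n, (omegaRoot n ^ r) ^ j = if r % n = 0 then (n : ℂ) else 0 := by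
  have hprim := Complex.isPrimitiveRoot_exp n hn.ne'
  by_cases h : r % n = 0
  · rw [if_pos h]
    have hone : omegaRoot n ^ r = 1 :=
      (hprim.pow_eq_one_iff_dvd r).mpr (Nat.dvd_of_mod_eq_zero h)
    simp [hone]
  · rw [if_neg h]
    have hne : omegaRoot n ^ r ≠ 1 := by
      intro hc
      obtain ⟨t, rfl⟩ := (hprim.pow_eq_one_iff_dvd r).mp hc
      exact h (Nat.mul_mod_right n t)
    have hgeom := geom_sum_mul (omegaRoot n ^ r) n
    have hzero : (omegaRoot n ^ r) ^ n - 1 = 0 := by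
      rw [← pow_mul, Nat.mul_comm, pow_mul, omega_pow_n hn, one_pow, sub_self]
    rw [hzero] at hgeom
    rcases mul_eq_zero.mp hgeom with h1 | h1
    · exact h1
    · exact absurd (sub_eq_zero.mp h1) hne

section E

variable (n : ℕ) (y yinv d γ : Q) (e : ℕ → Q)

lemma y_gamma_pow (hyγ : y * γ = omegaRoot n • (γ * y)) (j : ℕ) :
    y * γ ^ j = (omegaRoot n ^ j) • (γ ^ j * y) := by
  induction j with
  | zero => simp
  | succ j ih =>
      rw [pow_succ, ← mul_assoc, ih, smul_mul_assoc, mul_assoc, hyγ,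
        mul_smul_comm, smul_smul, ← mul_assoc, ← pow_succ, ← pow_succ]

lemma gamma_pow_d (hγd : γ * d = omegaRoot n • (d * γ)) (j : ℕ) :
    γ ^ j * d = (omegaRoot n ^ j) • (d * γ ^ j) := by
  induction j with
  | zero => simp
  | succ j ih =>
      rw [pow_succ', mul_assoc, ih, mul_smul_comm, ← mul_assoc, hγd,
        smul_mul_assoc, smul_smul, mul_assoc, ← pow_succ', ← pow_succ]

lemma e_explicit
    (he : ∀ i, e i = (n : ℂ)⁻¹ • ∑ j ∈ range n, ((omegaRoot n) ^ i • γ) ^ j)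
    (i : ℕ) :
    e i = (n : ℂ)⁻¹ • ∑ j ∈ range n, (omegaRoot n ^ (i * j)) • γ ^ j := by
  rw [he i]
  congr 1
  refine Finset.sum_congr rfl fun j _ => ?_
  rw [smul_pow, ← pow_mul]

lemma e_per
    (he : ∀ i, e i = (n : ℂ)⁻¹ • ∑ j ∈ range n, ((omegaRoot n) ^ i • γ) ^ j)
    (hn : 0 < n) (i : ℕ) : e (i + n) = e i := by
  rw [e_explicit n γ e he, e_explicit n γ e he]
  congr 1
  refine Finset.sum_congr rfl fun j _ => ?_
  congr 1
  rw [add_mul, pow_add, pow_mul (omegaRoot n) n j, omega_pow_n hn, one_pow,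
    mul_one]

lemma e_add_mul'
    (he : ∀ i, e i = (n : ℂ)⁻¹ • ∑ j ∈ range n, ((omegaRoot n) ^ i • γ) ^ j)
    (hn : 0 < n) (r q : ℕ) : e (r + q * n) = e r := by
  induction q with
  | zero => simp
  | succ q ih => rw [Nat.succ_mul, ← Nat.add_assoc, e_per n γ e he hn, ih]

lemma e_mod'
    (he : ∀ i, e i = (n : ℂ)⁻¹ • ∑ j ∈ range n, ((omegaRoot n) ^ i • γ) ^ j)
    (hn : 0 < n) (i : ℕ) : e i = e (i % n) := by
  conv_lhs => rw [← Nat.mod_add_div i n, Nat.mul_comm, e_add_mul' n γ e he hn]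

lemma e_gamma
    (he : ∀ i, e i = (n : ℂ)⁻¹ • ∑ j ∈ range n, ((omegaRoot n) ^ i • γ) ^ j)
    (hn2 : 2 ≤ n) (hγ : γ ^ n = 1) (i : ℕ) :
    e i * γ = (omegaRoot n ^ ((n - 1) * i)) • e i := by
  have hn : 0 < n := by omega
  have key : (∑ j ∈ range n, (omegaRoot n ^ (i * j)) • γ ^ j) * γ
      = omegaRoot n ^ ((n - 1) * i)
          • ∑ j ∈ range n, (omegaRoot n ^ (i * j)) • γ ^ j := by
    rw [Finset.sum_mul, Finset.smul_sum]
    have hL : ∀ j : ℕ, (omegaRoot n ^ (i * j)) • γ ^ j * γ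
        = (omegaRoot n ^ (i * j)) • γ ^ (j + 1) := by
      intro j; rw [smul_mul_assoc, ← pow_succ]
    have hR : ∀ j : ℕ, omegaRoot n ^ ((n - 1) * i)
          • ((omegaRoot n ^ (i * j)) • γ ^ j)
        = (omegaRoot n ^ ((n - 1) * i + i * j)) • γ ^ j := by
      intro j; rw [smul_smul, ← pow_add]
    rw [Finset.sum_congr rfl fun j _ => hL j, Finset.sum_congr rfl fun j _ => hR j]
    obtain ⟨m, rfl⟩ : ∃ m, n = m + 1 := ⟨n - 1, by omega⟩
    rw [Finset.sum_range_succ, Finset.sum_range_succ']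
    congr 1
    · refine Finset.sum_congr rfl fun j hj => ?_
      congr 1
      have h1 : (m + 1 - 1) * i + i * (j + 1) = i * j + (m + 1) * i := by
        simp only [Nat.add_sub_cancel]
        ring
      rw [h1, pow_add, pow_mul (omegaRoot (m + 1)) (m + 1) i, omega_pow_n hn,
        one_pow, mul_one]
    · simp only [Nat.add_sub_cancel, Nat.mul_zero, Nat.add_zero, pow_zero]
      rw [hγ, Nat.mul_comm]
  rw [e_explicit n γ e he, smul_mul_assoc, key, smul_comm]

lemma e_gamma_pow
    (he : ∀ i, e i = (n : ℂ)⁻¹ • ∑ j ∈ range n, ((omegaRoot n) ^ i • γ) ^ j)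
    (hn2 : 2 ≤ n) (hγ : γ ^ n = 1) (i l : ℕ) :
    e i * γ ^ l = ((omegaRoot n ^ ((n - 1) * i)) ^ l) • e i := by
  induction l with
  | zero => simp
  | succ l ih =>
      rw [pow_succ, ← mul_assoc, ih, smul_mul_assoc, e_gamma n γ e he hn2 hγ,
        smul_smul, ← pow_succ]

lemma mod_cond (hn2 : 2 ≤ n) (i j : ℕ) :
    (j + (n - 1) * i) % n = 0 ↔ i % n = j % n := by
  have hA : j + (n - 1) * i + i = j + i * n := by
    have h1 : n - 1 + 1 = n := by omega
    calc j + (n - 1) * i + i = j + ((n - 1) + 1) * i := by ring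
      _ = j + i * n := by rw [h1]; ring
  constructor
  · intro h
    have h2 : (j + (n - 1) * i + i) % n = (0 + i) % n := Nat.ModEq.add_right i h
    rw [hA, Nat.add_mul_mod_self_right, Nat.zero_add] at h2
    exact (h2.symm : _)
  · intro h
    have h2 : (j + i * n) % n = i % n := by
      rw [Nat.add_mul_mod_self_right, ← h]
    have h3 : (j + (n - 1) * i + i) % n = (0 + i) % n := by
      rw [hA, h2, Nat.zero_add]
    exact Nat.ModEq.add_right_cancel' i h3

lemma horth'
    (he : ∀ i, e i = (n : ℂ)⁻¹ • ∑ j ∈ range n, ((omegaRoot n) ^ i • γ) ^ j)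
    (hn2 : 2 ≤ n) (hγ : γ ^ n = 1) (i j : ℕ) :
    e i * e j = if i % n = j % n then e j else 0 := by
  have hn : 0 < n := by omega
  have key : e i * e j
      = ((n : ℂ)⁻¹ * (if (j + (n - 1) * i) % n = 0 then (n : ℂ) else 0)) • e i := by
    rw [e_explicit n γ e he j, mul_smul_comm, Finset.mul_sum]
    have h1 : ∀ l : ℕ, e i * (omegaRoot n ^ (j * l)) • γ ^ l
        = ((omegaRoot n ^ (j + (n - 1) * i)) ^ l) • e i := by
      intro l
      rw [mul_smul_comm, e_gamma_pow n γ e he hn2 hγ, smul_smul, ← pow_mul,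
        ← pow_mul, ← pow_add, ← Nat.add_mul]
    rw [Finset.sum_congr rfl fun l _ => h1 l, ← Finset.sum_smul,
      geom_omega hn (j + (n - 1) * i), smul_smul]
  rw [key]
  by_cases h : (j + (n - 1) * i) % n = 0
  · rw [if_pos h, inv_mul_cancel₀ (by exact_mod_cast (by omega : n ≠ 0)), one_smul]
    have hij := (mod_cond n hn2 i j).mp h
    rw [if_pos hij]
    rw [e_mod' n γ e he hn i, e_mod' n γ e he hn j, hij]
  · rw [if_neg h, mul_zero, zero_smul,
      if_neg (fun hc => h ((mod_cond n hn2 i j).mpr hc))]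

lemma hsum'
    (he : ∀ i, e i = (n : ℂ)⁻¹ • ∑ j ∈ range n, ((omegaRoot n) ^ i • γ) ^ j)
    (hn2 : 2 ≤ n) (hγ : γ ^ n = 1) :
    ∑ i ∈ range n, e i = 1 := by
  have hn : 0 < n := by omega
  have h1 : ∑ i ∈ range n, e i
      = (n : ℂ)⁻¹ • ∑ i ∈ range n, ∑ j ∈ range n, (omegaRoot n ^ (i * j)) • γ ^ j := by
    rw [Finset.smul_sum]
    exact Finset.sum_congr rfl fun i _ => e_explicit n γ e he i
  rw [h1, Finset.sum_comm]
  have h2 : ∀ j : ℕ, ∑ i ∈ range n, (omegaRoot n ^ (i * j)) • γ ^ j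
      = (∑ i ∈ range n, (omegaRoot n ^ j) ^ i) • γ ^ j := by
    intro j
    rw [Finset.sum_smul]
    refine Finset.sum_congr rfl fun i _ => ?_
    rw [← pow_mul, Nat.mul_comm]
  rw [Finset.sum_congr rfl fun j _ => h2 j]
  rw [Finset.sum_congr rfl fun j _ => by rw [geom_omega hn j]]
  rw [Finset.sum_eq_single 0]
  · rw [Nat.zero_mod, if_pos rfl, pow_zero, smul_smul,
      inv_mul_cancel₀ (by exact_mod_cast (by omega : n ≠ 0)), one_smul]
  · intro l hl hlne
    rw [Nat.mod_eq_of_lt (Finset.mem_range.mp hl), if_neg hlne, zero_smul]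
  · intro hmem
    exact absurd (Finset.mem_range.mpr hn) hmem

lemma hye'
    (he : ∀ i, e i = (n : ℂ)⁻¹ • ∑ j ∈ range n, ((omegaRoot n) ^ i • γ) ^ j)
    (hyγ : y * γ = omegaRoot n • (γ * y)) (i : ℕ) :
    y * e i = e (i + 1) * y := by
  rw [e_explicit n γ e he i, e_explicit n γ e he (i + 1), mul_smul_comm,
    smul_mul_assoc, Finset.mul_sum, Finset.sum_mul]
  congr 1
  refine Finset.sum_congr rfl fun j _ => ?_
  rw [mul_smul_comm, y_gamma_pow n y γ hyγ j, smul_smul, smul_mul_assoc,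
    ← pow_add]
  congr 2
  ring

lemma hed'
    (he : ∀ i, e i = (n : ℂ)⁻¹ • ∑ j ∈ range n, ((omegaRoot n) ^ i • γ) ^ j)
    (hγd : γ * d = omegaRoot n • (d * γ)) (i : ℕ) :
    e i * d = d * e (i + 1) := by
  rw [e_explicit n γ e he i, e_explicit n γ e he (i + 1), smul_mul_assoc,
    mul_smul_comm, Finset.sum_mul, Finset.mul_sum]
  congr 1
  refine Finset.sum_congr rfl fun j _ => ?_
  rw [smul_mul_assoc, gamma_pow_d n d γ hγd j, smul_smul, mul_smul_comm,
    ← pow_add]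
  congr 2
  ring

lemma hγe'
    (he : ∀ i, e i = (n : ℂ)⁻¹ • ∑ j ∈ range n, ((omegaRoot n) ^ i • γ) ^ j)
    (hn2 : 2 ≤ n) (hγ : γ ^ n = 1) :
    γ = ∑ i ∈ range n, (omegaRoot n ^ ((n - 1) * i)) • e i := by
  conv_lhs => rw [← one_mul γ, ← hsum' n γ e he hn2 hγ, Finset.sum_mul]
  exact Finset.sum_congr rfl fun i _ => e_gamma n γ e he hn2 hγ i

end E

/-- build the abstract context from the concrete data -/
noncomputable def mkCtx (n : ℕ) (hn2 : 2 ≤ n) (y yinv d γ : Q) (e : ℕ → Q)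
    (hy : y * yinv = 1) (hy' : yinv * y = 1)
    (hWeyl : d * y - y * d = 1)
    (hγ : γ ^ n = 1)
    (hyγ : y * γ = omegaRoot n • (γ * y))
    (hγd : γ * d = omegaRoot n • (d * γ))
    (he : ∀ i, e i = (n : ℂ)⁻¹ • ∑ j ∈ range n, ((omegaRoot n) ^ i • γ) ^ j) :
    Ctx Q where
  n := n
  hn2 := hn2
  y := y
  yinv := yinv
  d := d
  γ := γ
  e := e
  hyy' := hy
  hy'y := hy'
  hWeyl := hWeyl
  horth := horth' n γ e he hn2 hγ
  hsum := hsum' n γ e he hn2 hγ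
  hper := e_per n γ e he (by omega)
  hye := hye' n y γ e he hyγ
  hed := hed' n d γ e he hγd
  hγe := ⟨fun i => omegaRoot n ^ ((n - 1) * i), hγe' n γ e he hn2 hγ⟩

end Build

namespace Ctx

variable {Q : Type*} [Ring Q] [Algebra ℂ Q] (C : Ctx Q)

lemma y_d : C.y * C.d = C.d * C.y - 1 := by
  have h0 := C.hWeyl
  have h1 : C.d * C.y - (C.d * C.y - C.y * C.d) = C.d * C.y - 1 := by rw [h0]
  simpa using h1

lemma y_Lop_yinv (c : ℂ) : C.y * C.Lop c * C.yinv = C.Lop (c + 1) := by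
  unfold Lop
  rw [mul_sub, sub_mul, mul_smul_comm, smul_mul_assoc, C.hyy', C.y_d, sub_mul,
    one_mul, mul_assoc, C.hyy', mul_one]
  module

lemma ypow_Lop_yinvpow (p : ℕ) (c : ℂ) :
    C.y ^ p * C.Lop c * C.yinv ^ p = C.Lop (c + (p : ℂ)) := by
  induction p generalizing c with
  | zero => simp
  | succ p ih =>
      have h1 : C.y ^ (p + 1) * C.Lop c * C.yinv ^ (p + 1)
          = C.y ^ p * (C.y * C.Lop c * C.yinv) * C.yinv ^ p := by
        rw [pow_succ, pow_succ']
        simp only [mul_assoc]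
      rw [h1, C.y_Lop_yinv, ih (c + 1)]
      congr 1
      push_cast
      ring

lemma sum_collapse (κ : ℤ → ℂ) (hκ : ∀ j : ℤ, κ (j + C.n) = κ j)
    (hκ0 : κ 0 = 0) (j : ℕ) :
    (∑ i ∈ Icc 1 (C.n - 1), κ i • C.e i) * C.e j = κ j • C.e j := by
  rw [Finset.sum_mul]
  by_cases h0 : j % C.n = 0
  · have hkj : κ (j : ℤ) = 0 := by
      have h1 : κ ((j % C.n : ℕ) : ℤ) = κ (j : ℤ) :=
        C.kappa_nat κ hκ (Nat.mod_mod_of_dvd j dvd_rfl)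
      rw [h0] at h1
      rw [← h1]
      exact_mod_cast hκ0
    rw [hkj, zero_smul]
    apply Finset.sum_eq_zero
    intro i hi
    obtain ⟨hi1, hi2⟩ := Finset.mem_Icc.mp hi
    have hilt : i < C.n := by have := C.hn2; omega
    rw [smul_mul_assoc, C.orth0 (by rw [Nat.mod_eq_of_lt hilt, h0]; omega),
      smul_zero]
  · rw [Finset.sum_eq_single (j % C.n)]
    · rw [smul_mul_assoc, C.orth' (Nat.mod_mod_of_dvd j dvd_rfl)]
      congr 1
      exact C.kappa_nat κ hκ (Nat.mod_mod_of_dvd j dvd_rfl)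
    · intro i hi hne
      obtain ⟨hi1, hi2⟩ := Finset.mem_Icc.mp hi
      have hilt : i < C.n := by have := C.hn2; omega
      rw [smul_mul_assoc, C.orth0 (by rw [Nat.mod_eq_of_lt hilt]; exact hne),
        smul_zero]
    · intro hmem
      exfalso
      apply hmem
      have hlt : j % C.n < C.n := Nat.mod_lt j (by have := C.hn2; omega)
      exact Finset.mem_Icc.mpr ⟨by omega, by omega⟩

lemma dk_local (κ : ℤ → ℂ) (hκ : ∀ j : ℤ, κ (j + C.n) = κ j) (hκ0 : κ 0 = 0)
    {dkQ : Q} (hdkQ : dkQ = C.d - C.yinv * ∑ i ∈ Icc 1 (C.n - 1), κ i • C.e i)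
    (j : ℕ) : dkQ * C.e j = C.Lop (κ j) * C.e j := by
  rw [hdkQ]
  unfold Lop
  rw [sub_mul, sub_mul, mul_assoc, C.sum_collapse κ hκ hκ0 j, smul_mul_assoc,
    mul_smul_comm]

/-- conjugation by y^p as an algebra homomorphism -/
noncomputable def phiHom (p : ℕ) : Q →ₐ[ℂ] Q where
  toFun x := C.y ^ p * x * C.yinv ^ p
  map_one' := by
    show C.y ^ p * 1 * C.yinv ^ p = 1
    rw [mul_one, C.y_pow_yinv_pow]
  map_mul' a b := by
    show C.y ^ p * (a * b) * C.yinv ^ p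
        = (C.y ^ p * a * C.yinv ^ p) * (C.y ^ p * b * C.yinv ^ p)
    have h1 : (C.y ^ p * a * C.yinv ^ p) * (C.y ^ p * b * C.yinv ^ p)
        = C.y ^ p * (a * ((C.yinv ^ p * C.y ^ p) * (b * C.yinv ^ p))) := by
      simp only [mul_assoc]
    rw [h1, C.yinv_pow_y_pow, one_mul]
    simp only [mul_assoc]
  map_zero' := by simp
  map_add' a b := by
    show C.y ^ p * (a + b) * C.yinv ^ p = _
    rw [mul_add, add_mul]
  commutes' c := by
    show C.y ^ p * algebraMap ℂ Q c * C.yinv ^ p = algebraMap ℂ Q c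
    rw [Algebra.algebraMap_eq_smul_one, mul_smul_comm, smul_mul_assoc, mul_one,
      C.y_pow_yinv_pow]

@[simp] lemma phiHom_apply (p : ℕ) (x : Q) :
    C.phiHom p x = C.y ^ p * x * C.yinv ^ p := rfl

lemma phi_y (p : ℕ) : C.phiHom p C.y = C.y := by
  rw [phiHom_apply]
  have h1 : C.y ^ p * C.y = C.y * C.y ^ p := by
    rw [← pow_succ, ← pow_succ']
  rw [h1, mul_assoc, C.y_pow_yinv_pow, mul_one]

lemma phi_dk_local (p : ℕ) (κ : ℤ → ℂ) (hκ : ∀ j : ℤ, κ (j + C.n) = κ j)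
    {dkQ : Q} (hloc : ∀ j : ℕ, dkQ * C.e j = C.Lop (κ j) * C.e j) (j : ℕ) :
    C.phiHom p dkQ * C.e j = C.Lop (κ ((j : ℤ) - p) + p) * C.e j := by
  have h1 : 1 ≤ C.n := by have := C.hn2; omega
  rw [phiHom_apply]
  have hJ : C.yinv ^ p * C.e j = C.e (j + p * (C.n - 1)) * C.yinv ^ p :=
    C.yinv_pow_e p j
  set J := j + p * (C.n - 1) with hJdef
  have step1 : C.y ^ p * dkQ * C.yinv ^ p * C.e j
      = C.y ^ p * (dkQ * C.e J) * C.yinv ^ p := by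
    rw [mul_assoc (C.y ^ p * dkQ), hJ]
    simp only [mul_assoc]
  have hkJ : κ (J : ℤ) = κ ((j : ℤ) - p) := by
    apply C.kappa_congr κ hκ
    refine ⟨p, ?_⟩
    rw [hJdef]
    push_cast [Nat.cast_sub h1]
    ring
  have step2 : C.y ^ p * (C.Lop (κ ((j : ℤ) - p)) * C.e J) * C.yinv ^ p
      = (C.y ^ p * C.Lop (κ ((j : ℤ) - p)) * C.yinv ^ p) * C.e (J + p) := by
    calc C.y ^ p * (C.Lop (κ ((j : ℤ) - p)) * C.e J) * C.yinv ^ p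
        = C.y ^ p * (C.Lop (κ ((j : ℤ) - p)) * (C.e J * C.yinv ^ p)) := by
          simp only [mul_assoc]
      _ = C.y ^ p * (C.Lop (κ ((j : ℤ) - p)) * (C.yinv ^ p * C.e (J + p))) := by
          rw [C.e_yinv_pow p J]
      _ = (C.y ^ p * C.Lop (κ ((j : ℤ) - p)) * C.yinv ^ p) * C.e (J + p) := by
          simp only [mul_assoc]
  have heJ : C.e (J + p) = C.e j := by
    apply C.e_congr
    have h2 : J + p = j + p * C.n := by
      rw [hJdef]
      have h3 : p * (C.n - 1) + p = p * C.n := by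
        calc p * (C.n - 1) + p = p * ((C.n - 1) + 1) := by ring
          _ = p * C.n := by rw [Nat.sub_add_cancel h1]
      omega
    rw [h2, Nat.add_mul_mod_self_right]
  rw [step1, hloc J, hkJ, step2, heJ, C.ypow_Lop_yinvpow]

lemma phi_e (p i : ℕ) : C.phiHom p (C.e i) = C.e (i + p) := by
  rw [phiHom_apply, C.y_pow_e, mul_assoc, C.y_pow_yinv_pow, mul_one]

lemma phi_gamma (p : ℕ) (ω : ℂ) (hyγ : C.y * C.γ = ω • (C.γ * C.y)) :
    C.phiHom p C.γ = (ω ^ p) • C.γ := by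
  have hyg : ∀ q : ℕ, C.y ^ q * C.γ = (ω ^ q) • (C.γ * C.y ^ q) := by
    intro q
    induction q with
    | zero => simp
    | succ q ih =>
        rw [pow_succ', mul_assoc, ih, mul_smul_comm, ← mul_assoc, hyγ,
          smul_mul_assoc, smul_smul, mul_assoc, ← pow_succ', ← pow_succ]
  rw [phiHom_apply, hyg p, smul_mul_assoc, mul_assoc, C.y_pow_yinv_pow, mul_one]

lemma yconj (p : ℕ) (h : Q) :
    C.y ^ p * (C.e 0 * h * C.e 0)
      = C.e p * (C.phiHom p h) * (C.e p * C.y ^ p) := by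
  have h1 : C.e p * C.y ^ p = C.y ^ p * C.e 0 := by
    rw [C.y_pow_e p 0, Nat.zero_add]
  rw [phiHom_apply, h1]
  have h2 : C.e p * (C.y ^ p * h * C.yinv ^ p) * (C.y ^ p * C.e 0)
      = C.e p * C.y ^ p * (h * ((C.yinv ^ p * C.y ^ p) * C.e 0)) := by
    simp only [mul_assoc]
  rw [h2, C.yinv_pow_y_pow, one_mul, h1]
  simp only [mul_assoc]

end Ctx

section Bij

lemma mbij (b : ℕ) (σ : ℕ → ℕ) (hmem : ∀ u, u < b → σ u < b)
    (hinv : ∀ u, u < b → σ (σ u) = u) (f : ℕ → ℂ) :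
    (Multiset.range b).map (fun u => f (σ u)) = (Multiset.range b).map f := by
  classical
  have hInj : Set.InjOn σ ↑(Finset.range b) := by
    intro u hu v hv huv
    have hu' := Finset.mem_range.mp hu
    have hv' := Finset.mem_range.mp hv
    have h1 := congrArg σ huv
    rwa [hinv u hu', hinv v hv'] at h1
  have himg : (Finset.range b).image σ = Finset.range b := by
    apply Finset.eq_of_subset_of_card_le
    · intro x hx
      obtain ⟨u, hu, rfl⟩ := Finset.mem_image.mp hx
      exact Finset.mem_range.mpr (hmem u (Finset.mem_range.mp hu))
    · rw [Finset.card_image_of_injOn hInj]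
  calc (Multiset.range b).map (fun u => f (σ u))
      = ((Finset.range b).val.map σ).map f := by
        rw [Multiset.map_map]
        rfl
    _ = ((Finset.range b).image σ).val.map f := by
        rw [Finset.image_val_of_injOn hInj]
    _ = (Multiset.range b).map f := by rw [himg]; rfl

lemma refl_cong (n c u : ℕ) (hu : u ≤ n) :
    ((c + n - u) % n) + u ≡ c + n [MOD n] := by
  have h1 : (c + n - u) % n ≡ c + n - u [MOD n] := Nat.mod_modEq _ n
  have h2 := h1.add_right u
  have h3 : c + n - u + u = c + n := by omega
  rwa [h3] at h2

lemma refl_mem (n c : ℕ) (hn : 0 < n) (u : ℕ) : (c + n - u) % n < n :=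
  Nat.mod_lt _ hn

lemma refl_inv (n c : ℕ) (hn : 0 < n) (u : ℕ) (hu : u < n) :
    (c + n - ((c + n - u) % n)) % n = u := by
  set r := (c + n - u) % n with hr
  have hrlt : r < n := Nat.mod_lt _ hn
  have hru : r + u ≡ c + n [MOD n] := refl_cong n c u (le_of_lt hu)
  have hsr : ((c + n - r) % n) + r ≡ c + n [MOD n] := refl_cong n c r (le_of_lt hrlt)
  have hru' : u + r ≡ c + n [MOD n] := by rwa [Nat.add_comm] at hru
  have h4 : ((c + n - r) % n) + r ≡ u + r [MOD n] := hsr.trans hru'.symm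
  have h5 : (c + n - r) % n ≡ u [MOD n] := Nat.ModEq.add_right_cancel' r h4
  have hslt : (c + n - r) % n < n := Nat.mod_lt _ hn
  calc (c + n - r) % n = ((c + n - r) % n) % n := (Nat.mod_eq_of_lt hslt).symm
    _ = u % n := h5
    _ = u := Nat.mod_eq_of_lt hu

end Bij

end St4


open St4

/-- Fix `1 ≤ p ≤ n−1` and set `k' = k + w_p` (so `k'_i = k_i + n` for `1 ≤ i ≤ p` and
`k'_i = k_i` for `p < i ≤ n−1`, extended periodically).  Then
`y^p e H_k e = e_p H_{k'} e_p y^p` inside `Q = ℂ[∂, y^{±1}] * Γ`, where `e = e_0`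
and `H_k` is the subalgebra of `Q` generated by `d_k`, `y`, `γ`. -/
theorem statement4 {Q : Type*} [Ring Q] [Algebra ℂ Q] (n : ℕ) (hn : 0 < n)
    (y yinv d γ : Q)
    (hy : y * yinv = 1) (hy' : yinv * y = 1)
    (hWeyl : d * y - y * d = 1)
    (hγ : γ ^ n = 1)
    (hyγ : y * γ = omegaRoot n • (γ * y))
    (hγd : γ * d = omegaRoot n • (d * γ))
    (e : ℕ → Q)
    (he : ∀ i, e i = (n : ℂ)⁻¹ • ∑ j ∈ range n, ((omegaRoot n) ^ i • γ) ^ j)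
    (k k' : ℤ → ℂ) (hk0 : k 0 = 0) (hkper : ∀ j : ℤ, k (j + n) = k j)
    (p : ℕ) (hp1 : 1 ≤ p) (hpn : p ≤ n - 1)
    (hk'0 : k' 0 = 0) (hk'per : ∀ j : ℤ, k' (j + n) = k' j)
    (hk'lo : ∀ i : ℕ, 1 ≤ i → i ≤ p → k' i = k i + n)
    (hk'hi : ∀ i : ℕ, p < i → i ≤ n - 1 → k' i = k i)
    (dk dk' : Q)
    (hdk : dk = d - yinv * ∑ i ∈ Icc 1 (n - 1), k i • e i)
    (hdk' : dk' = d - yinv * ∑ i ∈ Icc 1 (n - 1), k' i • e i) :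
    (fun h => y ^ p * (e 0 * h * e 0)) '' (Algebra.adjoin ℂ {dk, y, γ} : Set Q)
      = (fun h => e p * h * (e p * y ^ p)) ''
          (Algebra.adjoin ℂ {dk', y, γ} : Set Q) := by
  have hn2 : 2 ≤ n := by omega
  have hplt : p < n := by omega
  set C : St4.Ctx Q := St4.mkCtx n hn2 y yinv d γ e hy hy' hWeyl hγ hyγ hγd he
    with hCdef
  -- kappa congruence in literal terms
  have kcong : ∀ (κ : ℤ → ℂ), (∀ j : ℤ, κ (j + n) = κ j) →
      ∀ {x y' : ℤ}, (n : ℤ) ∣ (x - y') → κ x = κ y' :=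
    fun κ hκ {x y'} hd => C.kappa_congr κ hκ hd
  -- local forms
  have hδdk : ∀ j : ℕ, dk * C.e j = C.Lop (k j) * C.e j :=
    C.dk_local k hkper hk0 hdk
  have hδ2 : ∀ j : ℕ, dk' * C.e j = C.Lop (k' j) * C.e j :=
    C.dk_local k' hk'per hk'0 hdk'
  set m : ℤ → ℂ := fun z => k (z - p) + p with hmdef
  have hmper : ∀ j : ℤ, m (j + n) = m j := by
    intro j
    show k (j + (n : ℤ) - p) + (p : ℂ) = k (j - p) + p
    rw [show (j : ℤ) + n - p = (j - p) + n by ring, hkper]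
  have hδ1 : ∀ j : ℕ, C.phiHom p dk * C.e j = C.Lop (m j) * C.e j :=
    fun j => C.phi_dk_local p k hkper hδdk j
  -- the common multiset
  set gfun : ℕ → ℂ := fun i => if i = 0 then (p : ℂ) else k i + p + n - i
    with hgdef
  have hn0 : 0 < n := hn
  have Hμ1 : (Multiset.range n).map (fun u : ℕ => m ((p : ℤ) - u) + (u : ℂ))
      = (Multiset.range n).map gfun := by
    have hpoint : ∀ u ∈ Multiset.range n,
        m ((p : ℤ) - u) + (u : ℂ) = gfun ((0 + n - u) % n) := by
      intro u hu
      have hun : u < n := Multiset.mem_range.mp hu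
      by_cases hu0 : u = 0
      · subst hu0
        have hσ : (0 + n - 0) % n = 0 := by simp
        rw [hσ]
        simp only [hmdef, hgdef, if_pos rfl]
        rw [show (p : ℤ) - ((0 : ℕ) : ℤ) - p = 0 by push_cast; ring, hk0]
        push_cast
        ring
      · have hσ : (0 + n - u) % n = n - u := by
          rw [Nat.zero_add]
          exact Nat.mod_eq_of_lt (by omega)
        rw [hσ]
        have hne : n - u ≠ 0 := by omega
        simp only [hmdef, hgdef, if_neg hne]
        have hknu : k ((p : ℤ) - u - p) = k ((n - u : ℕ) : ℤ) := by
          apply kcong k hkper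
          refine ⟨-1, ?_⟩
          push_cast [Nat.cast_sub (le_of_lt hun)]
          ring
        rw [hknu]
        push_cast [Nat.cast_sub (le_of_lt hun)]
        ring
    rw [Multiset.map_congr rfl hpoint]
    exact mbij n _ (fun u hu => refl_mem n 0 hn0 u)
      (fun u hu => refl_inv n 0 hn0 u hu) gfun
  have Hμ2 : (Multiset.range n).map (fun u : ℕ => k' ((p : ℤ) - u) + (u : ℂ))
      = (Multiset.range n).map gfun := by
    have hpoint : ∀ u ∈ Multiset.range n,
        k' ((p : ℤ) - u) + (u : ℂ) = gfun ((p + n - u) % n) := by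
      intro u hu
      have hun : u < n := Multiset.mem_range.mp hu
      set i := (p + n - u) % n with hidef
      have hilt : i < n := Nat.mod_lt _ hn0
      have hcong : i + u ≡ p + n [MOD n] := refl_cong n p u (le_of_lt hun)
      have hmodp : (i + u) % n = p := by
        have h1 : (p + n) % n = p := by
          rw [Nat.add_mod_right]
          exact Nat.mod_eq_of_lt hplt
        rw [Nat.ModEq] at hcong
        rw [hcong, h1]
      have huip : i + u = p ∨ i + u = p + n := by
        have hq := Nat.div_add_mod (i + u) n
        rw [hmodp] at hq
        have hlt2 : i + u < n * 2 := by omega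
        have hqlt : (i + u) / n < 2 := Nat.div_lt_of_lt_mul hlt2
        interval_cases h : (i + u) / n <;> omega
      have hkk' : k' ((p : ℤ) - u) = k' (i : ℤ) := by
        apply kcong k' hk'per
        have hdvd := hcong.dvd
        obtain ⟨t, ht⟩ := hdvd
        refine ⟨t - 1, ?_⟩
        push_cast at ht ⊢
        linarith
      rw [hkk']
      rcases (by omega : i = 0 ∨ (1 ≤ i ∧ i ≤ p) ∨ (p < i)) with h0 | ⟨hi1, hi2⟩ | hgt
      · have hup : u = p := by rcases huip with h | h <;> omega
        rw [h0]
        simp only [hgdef, if_pos rfl]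
        rw [Nat.cast_zero, hk'0, hup]
        ring
      · have hup : u = p - i := by rcases huip with h | h <;> omega
        have hne : i ≠ 0 := by omega
        simp only [hgdef, if_neg hne]
        rw [hk'lo i hi1 hi2, hup]
        push_cast [Nat.cast_sub hi2]
        ring
      · have hup : u = p + n - i := by rcases huip with h | h <;> omega
        have hne : i ≠ 0 := by omega
        simp only [hgdef, if_neg hne]
        rw [hk'hi i hgt (by omega), hup]
        push_cast [Nat.cast_sub (by omega : i ≤ p + n)]
        ring
    rw [Multiset.map_congr rfl hpoint]
    exact mbij n _ (fun u hu => refl_mem n p hn0 u)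
      (fun u hu => refl_inv n p hn0 u hu) gfun
  have Hμ : (Multiset.range n).map (fun u : ℕ => m ((p : ℤ) - u) + (u : ℂ))
      = (Multiset.range n).map (fun u : ℕ => k' ((p : ℤ) - u) + (u : ℂ)) :=
    Hμ1.trans Hμ2.symm
  -- adjoin images under conjugation
  have hωp : (omegaRoot n ^ p) ≠ 0 := pow_ne_zero _ (Complex.exp_ne_zero _)
  have hphiγ : C.phiHom p γ = (omegaRoot n ^ p) • γ :=
    C.phi_gamma p (omegaRoot n) hyγ
  have hphiy : C.phiHom p y = y := C.phi_y p
  have himg : (Algebra.adjoin ℂ ({dk, y, γ} : Set Q)).map (C.phiHom p)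
      = Algebra.adjoin ℂ {C.phiHom p dk, y, (omegaRoot n ^ p) • γ} := by
    rw [AlgHom.map_adjoin]
    congr 1
    rw [Set.image_insert_eq, Set.image_insert_eq, Set.image_singleton, hphiy,
      hphiγ]
  have hadj_eq : Algebra.adjoin ℂ ({C.phiHom p dk, y, (omegaRoot n ^ p) • γ} : Set Q)
      = Algebra.adjoin ℂ {C.phiHom p dk, y, γ} := by
    apply le_antisymm
    · rw [Algebra.adjoin_le_iff]
      intro g hg
      simp only [Set.mem_insert_iff, Set.mem_singleton_iff] at hg
      rcases hg with h | h | h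
      · rw [h]; exact Algebra.subset_adjoin (by simp)
      · rw [h]; exact Algebra.subset_adjoin (by simp)
      · rw [h]
        exact Subalgebra.smul_mem _ (Algebra.subset_adjoin (by simp)) _
    · rw [Algebra.adjoin_le_iff]
      intro g hg
      simp only [Set.mem_insert_iff, Set.mem_singleton_iff] at hg
      rcases hg with h | h | h
      · rw [h]; exact Algebra.subset_adjoin (by simp)
      · rw [h]; exact Algebra.subset_adjoin (by simp)
      · rw [h]
        have h1 : (omegaRoot n ^ p) • γ
            ∈ Algebra.adjoin ℂ ({C.phiHom p dk, y, (omegaRoot n ^ p) • γ} : Set Q) :=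
          Algebra.subset_adjoin (by simp)
        have h2 := Subalgebra.smul_mem _ h1 (omegaRoot n ^ p)⁻¹
        rwa [inv_smul_smul₀ hωp] at h2
  -- the two inclusions
  apply Set.eq_of_subset_of_subset
  · rintro x ⟨h, hh, rfl⟩
    have hΦmem : C.phiHom p h ∈ Algebra.adjoin ℂ {C.phiHom p dk, y, γ} := by
      rw [← hadj_eq, ← himg]
      exact Subalgebra.mem_map.mpr ⟨h, hh, rfl⟩
    obtain ⟨z, hz, hcomp⟩ := C.main_incl (C.phiHom p dk) dk' m k' hmper hk'per
      hδ1 hδ2 p Hμ hΦmem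
    refine ⟨z, hz, ?_⟩
    show e p * z * (e p * y ^ p) = y ^ p * (e 0 * h * e 0)
    have hyconj : y ^ p * (e 0 * h * e 0)
        = e p * (C.phiHom p h) * (e p * y ^ p) := C.yconj p h
    have hcomp' : e p * (C.phiHom p h) * e p = e p * z * e p := hcomp
    rw [hyconj]
    calc e p * z * (e p * y ^ p) = (e p * z * e p) * y ^ p := by
          simp only [mul_assoc]
      _ = (e p * (C.phiHom p h) * e p) * y ^ p := by rw [hcomp']
      _ = e p * (C.phiHom p h) * (e p * y ^ p) := by simp only [mul_assoc]
  · rintro x ⟨z, hz, rfl⟩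
    obtain ⟨w, hw, hcomp⟩ := C.main_incl dk' (C.phiHom p dk) k' m hk'per hmper
      hδ2 hδ1 p Hμ.symm hz
    have hw2 : w ∈ (Algebra.adjoin ℂ ({dk, y, γ} : Set Q)).map (C.phiHom p) := by
      rw [himg, hadj_eq]
      exact hw
    obtain ⟨h, hh, hΦh⟩ := Subalgebra.mem_map.mp hw2
    refine ⟨h, hh, ?_⟩
    show y ^ p * (e 0 * h * e 0) = e p * z * (e p * y ^ p)
    have hyconj : y ^ p * (e 0 * h * e 0)
        = e p * (C.phiHom p h) * (e p * y ^ p) := C.yconj p h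
    have hcomp' : e p * z * e p = e p * w * e p := hcomp
    rw [hyconj, hΦh]
    calc e p * w * (e p * y ^ p) = (e p * w * e p) * y ^ p := by
          simp only [mul_assoc]
      _ = (e p * z * e p) * y ^ p := by rw [← hcomp']
      _ = e p * z * (e p * y ^ p) := by simp only [mul_assoc]
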